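/- arXiv:2505.00413 — 5 statements merged into one kernel-verified Lean document; each statement's English description precedes it below -/
import Mathlib

section
/- Let R be a finite group, T ≤ R a subgroup, r = |R| and t = |T|. Then the number of subgroups H of R with T ≤ H ≤ R is at most (r/t)^(log₂(r/t)). -/
open Subgroup

private lemma relindex_ne_zero' {R : Type*} [Group R] [Finite R] (T H : Subgroup R) :
    T.relIndex H ≠ 0 :=
  Subgroup.index_ne_zero_of_finite

/-- Every subgroup `H` containing `T` is generated by `T` together with at most
`log₂ (relindex T H)` elements. -/
private lemma exists_gen (R : Type*) [Group R] [Finite R] :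
    ∀ m : ℕ, ∀ T H : Subgroup R, T ≤ H → T.relIndex H ≤ m →
    ∃ S : Finset R, S.card ≤ Nat.log 2 (T.relIndex H) ∧ H = T ⊔ Subgroup.closure ↑S := by
  intro m
  induction m with
  | zero =>
    intro T H hTH h0
    exact absurd (Nat.le_zero.mp h0) (relindex_ne_zero' T H)
  | succ m ih =>
    intro T H hTH hm
    classical
    by_cases hHT : H ≤ T
    · refine ⟨∅, Nat.zero_le _, ?_⟩
      simp [le_antisymm hHT hTH]
    · obtain ⟨x, hxH, hxT⟩ := SetLike.exists_of_lt (lt_of_le_not_ge hTH hHT)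
      set T' := T ⊔ Subgroup.closure {x} with hT'def
      have hTT' : T ≤ T' := le_sup_left
      have hT'H : T' ≤ H := sup_le hTH ((Subgroup.closure_le H).2 (by simpa using hxH))
      have hxT' : x ∈ T' := Subgroup.mem_sup_right (Subgroup.subset_closure rfl)
      have h1 : T.relIndex T' ≠ 1 :=
        fun h => hxT (Subgroup.relIndex_eq_one.mp h hxT')
      have h0 : T.relIndex T' ≠ 0 := relindex_ne_zero' T T'
      have h2 : 2 ≤ T.relIndex T' := by omega
      have hmul : T.relIndex T' * T'.relIndex H = T.relIndex H :=
        Subgroup.relIndex_mul_relIndex T T' H hTT' hT'H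
      have h0' : T'.relIndex H ≠ 0 := relindex_ne_zero' T' H
      have hdouble : 2 * T'.relIndex H ≤ T.relIndex H := by
        calc 2 * T'.relIndex H ≤ T.relIndex T' * T'.relIndex H :=
              Nat.mul_le_mul_right _ h2
          _ = T.relIndex H := hmul
      have hm' : T'.relIndex H ≤ m := by omega
      obtain ⟨S, hcard, hgen⟩ := ih T' H hT'H hm'
      refine ⟨insert x S, ?_, ?_⟩
      · calc (insert x S).card ≤ S.card + 1 := Finset.card_insert_le x S
          _ ≤ Nat.log 2 (T'.relIndex H) + 1 := by omega
          _ = Nat.log 2 (T'.relIndex H * 2) := (Nat.log_mul_base one_lt_two h0').symm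
          _ ≤ Nat.log 2 (T.relIndex H) := Nat.log_mono_right (by omega)
      · rw [hgen, hT'def, sup_assoc, Finset.coe_insert, Set.insert_eq,
          Subgroup.closure_union]

/-- The sup `T ⊔ closure (range g)` only depends on the cosets of the `g i` mod `T`. -/
private lemma sup_closure_congr {R : Type*} [Group R] (T : Subgroup R) {k : ℕ}
    (g₁ g₂ : Fin k → R) (h : ∀ i, (g₁ i)⁻¹ * g₂ i ∈ T) :
    T ⊔ Subgroup.closure (Set.range g₁) = T ⊔ Subgroup.closure (Set.range g₂) := by
  have key : ∀ (a b : Fin k → R), (∀ i, (a i)⁻¹ * b i ∈ T) →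
      T ⊔ Subgroup.closure (Set.range b) ≤ T ⊔ Subgroup.closure (Set.range a) := by
    intro a b hab
    refine sup_le le_sup_left ((Subgroup.closure_le _).2 ?_)
    rintro _ ⟨i, rfl⟩
    have ha : a i ∈ T ⊔ Subgroup.closure (Set.range a) :=
      Subgroup.mem_sup_right (Subgroup.subset_closure ⟨i, rfl⟩)
    have ht : (a i)⁻¹ * b i ∈ T ⊔ Subgroup.closure (Set.range a) :=
      Subgroup.mem_sup_left (hab i)
    have := mul_mem ha ht
    simpa using this
  have h' : ∀ i, (g₂ i)⁻¹ * g₁ i ∈ T := by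
    intro i
    have := inv_mem (h i)
    simpa [mul_inv_rev] using this
  exact le_antisymm (key g₂ g₁ h') (key g₁ g₂ h)

/-- The number of subgroups `H` of a finite group `R` containing a subgroup `T` is at most
`[R:T] ^ (log₂ [R:T])`. -/
theorem card_sub_le_index_pow_logb (R : Type*) [Group R] [Finite R] (T : Subgroup R) :
    ({H : Subgroup R | T ≤ H}.ncard : ℝ) ≤ (T.index : ℝ) ^ Real.logb 2 (T.index) := by
  classical
  set k := Nat.log 2 T.index with hk
  -- Step 1: every H in the set has a generating function Fin k → R
  have exists_g : ∀ H : {H : Subgroup R | T ≤ H}, ∃ g : Fin k → R,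
      (H : Subgroup R) = T ⊔ Subgroup.closure (Set.range g) := by
    rintro ⟨H, hH⟩
    obtain ⟨S, hcard, hgen⟩ := exists_gen R (T.relIndex H) T H hH le_rfl
    have hrel : T.relIndex H ≤ T.index := by
      have := Subgroup.relIndex_mul_index (show T ≤ H from hH)
      have h0 : H.index ≠ 0 := Subgroup.index_ne_zero_of_finite
      nlinarith [Nat.one_le_iff_ne_zero.mpr h0]
    have hcard' : S.card ≤ k := hcard.trans (Nat.log_mono_right hrel)
    -- pad S into a function Fin k → R
    refine ⟨fun i => if h : (i : ℕ) < S.toList.length then S.toList[(i : ℕ)] else 1, ?_⟩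
    have hrange : Subgroup.closure
        (Set.range fun i : Fin k =>
          if h : (i : ℕ) < S.toList.length then S.toList[(i : ℕ)] else 1) =
        Subgroup.closure (↑S : Set R) := by
      apply le_antisymm
      · refine (Subgroup.closure_le _).2 ?_
        rintro _ ⟨i, rfl⟩
        by_cases hi : (i : ℕ) < S.toList.length
        · simp only [hi, dif_pos]
          have hmem := List.getElem_mem hi
          rw [Finset.mem_toList] at hmem
          exact Subgroup.subset_closure hmem
        · simp only [hi, dif_neg, not_false_iff]
          exact one_mem _
      · refine (Subgroup.closure_le _).2 ?_
        intro x hx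
        have hx' : x ∈ S.toList := by simpa using hx
        obtain ⟨n, hn, hnx⟩ := List.getElem_of_mem hx'
        have hnk : n < k := lt_of_lt_of_le (by simpa [Finset.length_toList] using hn) hcard'
        have heq : (fun i : Fin k =>
            if h : (i : ℕ) < S.toList.length then S.toList[(i : ℕ)] else 1) ⟨n, hnk⟩ = x := by
          exact (dif_pos hn).trans hnx
        exact Subgroup.subset_closure ⟨⟨n, hnk⟩, heq⟩
    show H = _
    rw [hgen, hrange]
  choose g hg using exists_g
  -- Step 2: the map to coset tuples is injective
  have hinj : Function.Injective
      (fun H : {H : Subgroup R | T ≤ H} => (fun i => (QuotientGroup.mk (g H i) : R ⧸ T))) := by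
    intro H₁ H₂ hEq
    have h : ∀ i, (g H₁ i)⁻¹ * g H₂ i ∈ T := by
      intro i
      have := congrFun hEq i
      exact (QuotientGroup.leftRel_apply).mp (Quotient.exact this)
    have : (H₁ : Subgroup R) = (H₂ : Subgroup R) := by
      rw [hg H₁, hg H₂]
      exact sup_closure_congr T _ _ h
    exact Subtype.ext this
  -- Step 3: count
  have hcount : ({H : Subgroup R | T ≤ H}.ncard : ℕ) ≤ T.index ^ k := by
    have := Nat.card_le_card_of_injective _ hinj
    rw [Nat.card_coe_set_eq] at this
    refine this.trans ?_
    rw [Nat.card_pi]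
    simp [Subgroup.index]
  have hidx1 : (1 : ℝ) ≤ (T.index : ℝ) := by
    have : T.index ≠ 0 := Subgroup.index_ne_zero_of_finite
    exact_mod_cast Nat.one_le_iff_ne_zero.mpr this
  calc ({H : Subgroup R | T ≤ H}.ncard : ℝ) ≤ ((T.index ^ k : ℕ) : ℝ) := by exact_mod_cast hcount
    _ = (T.index : ℝ) ^ (k : ℝ) := by
        rw [Real.rpow_natCast]; push_cast; ring
    _ ≤ (T.index : ℝ) ^ Real.logb 2 (T.index) :=
        Real.rpow_le_rpow_of_exponent_le hidx1 (Real.natLog_le_logb _ _)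
end

section
/- Let P be a finite p-group and T ≤ P a subgroup of index p^c. Then for every k with 0 ≤ k ≤ c, the number of subgroups H of P with T ≤ H and [P:H] = p^k is at most the Gaussian binomial coefficient binom_p(c, k). -/
open Finset

/-- The Gaussian binomial coefficient `binom_p(m, r) = ∏_{i=0}^{r-1} (p^{m-i}-1)/(p^{i+1}-1)`. -/
noncomputable def gaussBinom (p m r : ℕ) : ℝ :=
  ∏ i ∈ Finset.range r, ((p : ℝ) ^ (m - i) - 1) / ((p : ℝ) ^ (i + 1) - 1)

namespace GaussAux
universe u v


variable {p : ℕ}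

lemma num_nonneg (hp : 2 ≤ p) (j : ℕ) : (0:ℝ) ≤ (p:ℝ) ^ j - 1 := by
  have : (1:ℝ) ≤ (p:ℝ) ^ j := one_le_pow₀ (by exact_mod_cast hp.trans' (by norm_num))
  linarith

lemma den_pos (hp : 2 ≤ p) (i : ℕ) : (0:ℝ) < (p:ℝ) ^ (i+1) - 1 := by
  have h2 : (2:ℝ) ≤ (p:ℝ) := by exact_mod_cast hp
  have : (2:ℝ) ≤ (p:ℝ) ^ (i+1) := by
    calc (2:ℝ) = 2^1 := by norm_num
    _ ≤ (2:ℝ)^(i+1) := by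
      apply pow_le_pow_right₀ (by norm_num) (by omega)
    _ ≤ (p:ℝ)^(i+1) := by
      apply pow_le_pow_left₀ (by norm_num) h2
  linarith

lemma gauss_nonneg (hp : 2 ≤ p) (m r : ℕ) : 0 ≤ gaussBinom p m r := by
  apply Finset.prod_nonneg
  intro i _
  exact div_nonneg (num_nonneg hp _) (den_pos hp i).le

lemma gauss_zero (m : ℕ) : gaussBinom p m 0 = 1 := by simp [gaussBinom]

lemma gauss_eq (m r : ℕ) : gaussBinom p m r =
    (∏ i ∈ range r, ((p:ℝ) ^ (m - i) - 1)) / (∏ i ∈ range r, ((p:ℝ) ^ (i + 1) - 1)) := by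
  rw [gaussBinom, Finset.prod_div_distrib]

lemma den_prod_pos (hp : 2 ≤ p) (r : ℕ) : (0:ℝ) < ∏ i ∈ range r, ((p:ℝ) ^ (i + 1) - 1) :=
  Finset.prod_pos fun i _ => den_pos hp i

lemma gauss_self (hp : 2 ≤ p) (c : ℕ) : gaussBinom p c c = 1 := by
  rw [gauss_eq]
  rw [div_eq_one_iff_eq (den_prod_pos hp c).ne']
  rw [← Finset.prod_range_reflect (fun i => ((p:ℝ) ^ (i + 1) - 1)) c]
  apply Finset.prod_congr rfl
  intro i hi
  simp only [Finset.mem_range] at hi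
  congr 2
  omega

lemma gauss_pascal (hp : 2 ≤ p) {c k : ℕ} (hk : k ≤ c) :
    gaussBinom p (c+1) (k+1) =
      gaussBinom p c (k+1) + (p:ℝ) ^ (c - k) * gaussBinom p c k := by
  have hshift : (∏ i ∈ range k, ((p:ℝ) ^ (c + 1 - (i+1)) - 1))
      = ∏ i ∈ range k, ((p:ℝ) ^ (c - i) - 1) := by
    apply Finset.prod_congr rfl
    intro i _
    congr 2
    omega
  have hN1 : (∏ i ∈ range (k+1), ((p:ℝ) ^ (c + 1 - i) - 1))
      = ((p:ℝ) ^ (c+1) - 1) * ∏ i ∈ range k, ((p:ℝ) ^ (c - i) - 1) := by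
    rw [Finset.prod_range_succ' (fun i => ((p:ℝ) ^ (c + 1 - i) - 1)) k]
    simp only [Nat.sub_zero]
    rw [hshift, mul_comm]
  have hN2 : (∏ i ∈ range (k+1), ((p:ℝ) ^ (c - i) - 1))
      = (∏ i ∈ range k, ((p:ℝ) ^ (c - i) - 1)) * ((p:ℝ) ^ (c - k) - 1) :=
    Finset.prod_range_succ _ _
  have hD : (∏ i ∈ range (k+1), ((p:ℝ) ^ (i + 1) - 1))
      = (∏ i ∈ range k, ((p:ℝ) ^ (i + 1) - 1)) * ((p:ℝ) ^ (k+1) - 1) :=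
    Finset.prod_range_succ _ _
  have hpow : (p:ℝ) ^ (c+1) = (p:ℝ) ^ (c - k) * (p:ℝ) ^ (k+1) := by
    rw [← pow_add]; congr 1; omega
  have key : (p:ℝ) ^ (c+1) - 1 = ((p:ℝ) ^ (c-k) - 1) + (p:ℝ)^(c-k) * ((p:ℝ) ^ (k+1) - 1) := by
    rw [hpow]; ring
  have hDk := (den_prod_pos hp k).ne'
  have hdk1 := (den_pos hp k).ne'
  rw [gauss_eq, gauss_eq, gauss_eq, hN1, hN2, hD, key]
  field_simp


/-- counting homomorphisms into a group of order ≤ p that kill a subgroup `S`: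
there are at most `S.index` of them. -/
lemma card_hom_le : ∀ (n : ℕ) (p : ℕ), p.Prime →
    ∀ (G : Type u) [Group G] [Finite G], IsPGroup p G →
    ∀ (Z' : Type v) [CommGroup Z'] [Finite Z'], Nat.card Z' ≤ p →
    ∀ S : Subgroup G, S.index ≤ n →
    Nat.card {f : G →* Z' // ∀ s ∈ S, f s = 1} ≤ S.index := by
  intro n
  induction n with
  | zero =>
    intro p hp G _ _ hG Z' _ _ hZ S hS
    exact absurd (Nat.le_zero.mp hS) S.index_ne_zero_of_finite
  | succ n IH =>
    intro p hp G _ _ hG Z' _ _ hZ S hS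
    haveI : Finite (G →* Z') :=
      Finite.of_injective (fun f => (f : G → Z')) DFunLike.coe_injective
    by_cases htop : S = ⊤
    · subst htop
      have : Subsingleton {f : G →* Z' // ∀ s ∈ (⊤ : Subgroup G), f s = 1} := by
        constructor
        rintro ⟨f, hf⟩ ⟨g, hg⟩
        apply Subtype.ext
        ext x
        rw [hf x trivial, hg x trivial]
      rw [Subgroup.index_top]
      calc Nat.card {f : G →* Z' // ∀ s ∈ (⊤ : Subgroup G), f s = 1}
          ≤ Nat.card (Fin 1) := Nat.card_le_card_of_injective (fun _ => (0 : Fin 1))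
            (fun a b _ => Subsingleton.elim a b)
        _ = 1 := by simp
    · obtain ⟨x, hx⟩ : ∃ x : G, x ∉ S := by
        by_contra h
        push_neg at h
        exact htop ((Subgroup.eq_top_iff' S).mpr h)
      set S' : Subgroup G := S ⊔ Subgroup.zpowers x with hS'def
      have hSS' : S ≤ S' := le_sup_left
      have hxS' : x ∈ S' := Subgroup.mem_sup_right (Subgroup.mem_zpowers x)
      -- relindex is a power of p, bigger than 1
      haveI : Fact p.Prime := ⟨hp⟩
      have hrel : p ≤ S.relIndex S' := by
        haveI : (S.subgroupOf S').FiniteIndex := ⟨Subgroup.index_ne_zero_of_finite⟩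
        obtain ⟨j, hj⟩ := (hG.to_subgroup S').index (S.subgroupOf S')
        have hj0 : j ≠ 0 := by
          intro h
          rw [h, pow_zero] at hj
          have : S' ≤ S := Subgroup.relIndex_eq_one.mp hj
          exact hx (this hxS')
        calc p = p ^ 1 := (pow_one p).symm
        _ ≤ p ^ j := Nat.pow_le_pow_right hp.pos (by omega)
        _ = S.relIndex S' := hj.symm
      have hrelmul : S.relIndex S' * S'.index = S.index := Subgroup.relIndex_mul_index hSS'
      have hS'lt : S'.index < S.index := by
        have h1 : S'.index ≠ 0 := S'.index_ne_zero_of_finite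
        have h2 := hp.two_le
        calc S'.index < 2 * S'.index := by omega
        _ ≤ S.relIndex S' * S'.index := Nat.mul_le_mul_right _ (by omega)
        _ = S.index := hrelmul
      have hS'n : S'.index ≤ n := by omega
      have hIH := IH p hp G hG Z' hZ S' hS'n
      -- injection into Z' × homs trivial on S'
      haveI : Inhabited {f : G →* Z' // ∀ s ∈ S, f s = 1} := ⟨⟨1, fun _ _ => rfl⟩⟩
      classical
      let r : Z' → {f : G →* Z' // ∀ s ∈ S, f s = 1} := fun ζ =>
        if h : ∃ f₀ : {f : G →* Z' // ∀ s ∈ S, f s = 1}, (f₀ : G →* Z') x = ζ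
        then h.choose else default
      have key : ∀ f : {f : G →* Z' // ∀ s ∈ S, f s = 1},
          ((r ((f : G →* Z') x)) : G →* Z') x = (f : G →* Z') x := by
        intro f
        have hex : ∃ f₀ : {f : G →* Z' // ∀ s ∈ S, f s = 1},
            (f₀ : G →* Z') x = (f : G →* Z') x := ⟨f, rfl⟩
        simp only [r, dif_pos hex]
        exact hex.choose_spec
      let Φ : {f : G →* Z' // ∀ s ∈ S, f s = 1} →
          Z' × {g : G →* Z' // ∀ s ∈ S', g s = 1} := fun f =>
        ⟨(f : G →* Z') x,
         ⟨(f : G →* Z') * ((r ((f : G →* Z') x) : G →* Z'))⁻¹, by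
            intro s hs
            have hker : S' ≤ ((f : G →* Z') * ((r ((f : G →* Z') x) : G →* Z'))⁻¹).ker := by
              rw [hS'def]
              apply sup_le
              · intro t ht
                rw [MonoidHom.mem_ker]
                simp only [MonoidHom.mul_apply, MonoidHom.inv_apply]
                rw [f.2 t ht, (r ((f : G →* Z') x)).2 t ht]
                simp
              · rw [Subgroup.zpowers_le, MonoidHom.mem_ker]
                simp only [MonoidHom.mul_apply, MonoidHom.inv_apply]
                rw [key f]
                simp
            exact hker hs⟩⟩
      have hΦ : Function.Injective Φ := by
        rintro f g hfg
        obtain ⟨h1, h2⟩ := Prod.ext_iff.mp hfg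
        simp only [Φ] at h1 h2
        apply Subtype.ext
        have h2' : (f : G →* Z') * ((r ((f : G →* Z') x) : G →* Z'))⁻¹
            = (g : G →* Z') * ((r ((g : G →* Z') x) : G →* Z'))⁻¹ :=
          congrArg Subtype.val h2
        rw [h1] at h2'
        exact mul_right_cancel h2'
      calc Nat.card {f : G →* Z' // ∀ s ∈ S, f s = 1}
          ≤ Nat.card (Z' × {g : G →* Z' // ∀ s ∈ S', g s = 1}) :=
            Nat.card_le_card_of_injective Φ hΦ
        _ = Nat.card Z' * Nat.card {g : G →* Z' // ∀ s ∈ S', g s = 1} := Nat.card_prod _ _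
        _ ≤ p * S'.index := Nat.mul_le_mul hZ hIH
        _ ≤ S.relIndex S' * S'.index := Nat.mul_le_mul_right _ hrel
        _ = S.index := hrelmul


variable {P : Type u} [Group P]

open Subgroup Pointwise

lemma zpowers_normal {z : P} (hz : z ∈ Subgroup.center P) : (zpowers z).Normal := by
  constructor
  intro n hn g
  have hc : n ∈ Subgroup.center P := (zpowers_le.mpr hz) hn
  have he : g * n * g⁻¹ = n := by
    rw [Subgroup.mem_center_iff.mp hc g]
    group
  rwa [he]

lemma exists_decomp {z : P} (hz : z ∈ Subgroup.center P) {H K : Subgroup P}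
    (hsup : H ⊔ zpowers z = K) (x : P) (hx : x ∈ K) :
    ∃ w ∈ zpowers z, x * w⁻¹ ∈ H := by
  haveI := zpowers_normal hz
  have hx' : x ∈ ((H : Set P) * (zpowers z : Set P)) := by
    rw [← Subgroup.mul_normal H (zpowers z), hsup]
    exact hx
  obtain ⟨a, ha, w, hw, haw⟩ := Set.mem_mul.mp hx'
  exact ⟨w, hw, by rw [← haw]; simpa using ha⟩

lemma decomp_unique {z : P} {H : Subgroup P}
    (hinf : H ⊓ zpowers z = ⊥) {x : P} {w₁ w₂ : P}
    (hw₁ : w₁ ∈ zpowers z) (hw₂ : w₂ ∈ zpowers z)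
    (h₁ : x * w₁⁻¹ ∈ H) (h₂ : x * w₂⁻¹ ∈ H) : w₁ = w₂ := by
  have hmem : w₂ * w₁⁻¹ ∈ H ⊓ zpowers z := by
    constructor
    · have : (x * w₂⁻¹)⁻¹ * (x * w₁⁻¹) ∈ H := H.mul_mem (H.inv_mem h₂) h₁
      have he : (x * w₂⁻¹)⁻¹ * (x * w₁⁻¹) = w₂ * w₁⁻¹ := by group
      rwa [he] at this
    · exact (zpowers z).mul_mem hw₂ ((zpowers z).inv_mem hw₁)
  rw [hinf, Subgroup.mem_bot] at hmem
  have : w₂ = w₁ := by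
    have := mul_eq_one_iff_eq_inv.mp hmem
    simpa using this
  exact this.symm

/-- the projection `K → Z` along `H`, when `K = H ⊔ Z`, `H ⊓ Z = ⊥`, `Z = zpowers z` central. -/
noncomputable def projZ {z : P} (hz : z ∈ Subgroup.center P) {H K : Subgroup P}
    (hsup : H ⊔ zpowers z = K) (hinf : H ⊓ zpowers z = ⊥) : ↥K →* ↥(zpowers z) :=
  MonoidHom.mk'
    (fun x => ⟨(exists_decomp hz hsup x.1 x.2).choose,
               (exists_decomp hz hsup x.1 x.2).choose_spec.1⟩)
    (by
      intro x y
      set wx := (exists_decomp hz hsup x.1 x.2).choose with hwx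
      set wy := (exists_decomp hz hsup y.1 y.2).choose with hwy
      obtain ⟨hwx1, hwx2⟩ := (exists_decomp hz hsup x.1 x.2).choose_spec
      obtain ⟨hwy1, hwy2⟩ := (exists_decomp hz hsup y.1 y.2).choose_spec
      obtain ⟨hwxy1, hwxy2⟩ := (exists_decomp hz hsup (x*y).1 (x*y).2).choose_spec
      apply Subtype.ext
      show (exists_decomp hz hsup (x*y).1 (x*y).2).choose = wx * wy
      apply decomp_unique hinf hwxy1 ((zpowers z).mul_mem hwx1 hwy1) hwxy2
      have cx : (wx)⁻¹ ∈ Subgroup.center P :=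
        (Subgroup.center P).inv_mem ((zpowers_le.mpr hz) hwx1)
      have he : ((x:P) * y) * (wx * wy)⁻¹ = (x * wx⁻¹) * (y * wy⁻¹) := by
        have h1 : ((y:P) * wy⁻¹) * wx⁻¹ = wx⁻¹ * ((y:P) * wy⁻¹) :=
          Subgroup.mem_center_iff.mp cx ((y:P) * wy⁻¹)
        calc ((x:P) * y) * (wx * wy)⁻¹ = x * (((y:P) * wy⁻¹) * wx⁻¹) := by
              rw [mul_inv_rev]; group
        _ = x * (wx⁻¹ * ((y:P) * wy⁻¹)) := by rw [h1]
        _ = (x * wx⁻¹) * (y * wy⁻¹) := by group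
      show ((x:P) * (y:P)) * (wx * wy)⁻¹ ∈ H
      rw [he]
      exact H.mul_mem hwx2 hwy2)


lemma projZ_spec {z : P} (hz : z ∈ Subgroup.center P) {H K : Subgroup P}
    (hsup : H ⊔ zpowers z = K) (hinf : H ⊓ zpowers z = ⊥) (x : ↥K) :
    (x : P) * ((projZ hz hsup hinf x : P))⁻¹ ∈ H :=
  (exists_decomp hz hsup x.1 x.2).choose_spec.2

lemma projZ_eq_iff {z : P} (hz : z ∈ Subgroup.center P) {H K : Subgroup P}
    (hsup : H ⊔ zpowers z = K) (hinf : H ⊓ zpowers z = ⊥) (x : ↥K) (w : ↥(zpowers z)) :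
    projZ hz hsup hinf x = w ↔ (x : P) * (w : P)⁻¹ ∈ H := by
  constructor
  · rintro rfl
    exact projZ_spec hz hsup hinf x
  · intro h
    apply Subtype.ext
    exact decomp_unique hinf (projZ hz hsup hinf x).2 w.2 (projZ_spec hz hsup hinf x) h

lemma projZ_ker {z : P} (hz : z ∈ Subgroup.center P) {H K : Subgroup P}
    (hsup : H ⊔ zpowers z = K) (hinf : H ⊓ zpowers z = ⊥) :
    (projZ hz hsup hinf).ker = H.subgroupOf K := by
  ext x
  rw [MonoidHom.mem_ker, Subgroup.mem_subgroupOf, projZ_eq_iff hz hsup hinf x 1]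
  simp

lemma projZ_surjective {z : P} (hz : z ∈ Subgroup.center P) {H K : Subgroup P}
    (hsup : H ⊔ zpowers z = K) (hinf : H ⊓ zpowers z = ⊥) :
    Function.Surjective (projZ hz hsup hinf) := by
  intro w
  have hwK : (w : P) ∈ K := by
    rw [← hsup]
    exact Subgroup.mem_sup_right w.2
  refine ⟨⟨(w : P), hwK⟩, ?_⟩
  rw [projZ_eq_iff]
  simpa using H.one_mem

lemma relindex_compl {z : P} (hz : z ∈ Subgroup.center P) {H K : Subgroup P}
    (hsup : H ⊔ zpowers z = K) (hinf : H ⊓ zpowers z = ⊥) :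
    H.relIndex K = orderOf z := by
  have h1 : H.relIndex K = (H.subgroupOf K).index := rfl
  rw [h1, ← projZ_ker hz hsup hinf, Subgroup.index_ker,
    MonoidHom.range_eq_top_of_surjective _ (projZ_surjective hz hsup hinf),
    Subgroup.card_top, Nat.card_zpowers]


open scoped IsMulCommutative in
lemma fiber_card {p : ℕ} (hp : p.Prime) {Q : Type u} [Group Q] [Finite Q]
    (hQ : IsPGroup p Q) {z : Q} (hz : z ∈ Subgroup.center Q) (hzp : orderOf z = p)
    (T K H₀ : Subgroup Q) (hT₀ : T ≤ H₀) (hsup₀ : H₀ ⊔ zpowers z = K)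
    (hinf₀ : H₀ ⊓ zpowers z = ⊥) :
    Nat.card {H : Subgroup Q // T ≤ H ∧ H ⊔ zpowers z = K ∧ H ⊓ zpowers z = ⊥}
      ≤ T.relIndex H₀ := by
  have hH₀K : H₀ ≤ K := by rw [← hsup₀]; exact le_sup_left
  let F : {H : Subgroup Q // T ≤ H ∧ H ⊔ zpowers z = K ∧ H ⊓ zpowers z = ⊥} →
      {f : ↥H₀ →* ↥(zpowers z) // ∀ s ∈ T.subgroupOf H₀, f s = 1} := fun H =>
    ⟨(projZ hz H.2.2.1 H.2.2.2).comp (Subgroup.inclusion hH₀K), by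
      intro s hs
      rw [MonoidHom.comp_apply, projZ_eq_iff]
      have hco : (Subgroup.inclusion hH₀K s : Q) = (s : Q) := Subgroup.coe_inclusion hH₀K s
      rw [hco]
      simpa using H.2.1 (Subgroup.mem_subgroupOf.mp hs)⟩
  have hle : ∀ (H H' : {H : Subgroup Q // T ≤ H ∧ H ⊔ zpowers z = K ∧ H ⊓ zpowers z = ⊥}),
      F H = F H' → (H : Subgroup Q) ≤ (H' : Subgroup Q) := by
    intro H H' hFF a ha
    have haK : a ∈ K := by
      rw [← H.2.2.1]
      exact Subgroup.mem_sup_left ha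
    set w : ↥(zpowers z) := projZ hz hsup₀ hinf₀ ⟨a, haK⟩ with hw
    have hspec : a * ((w : Q))⁻¹ ∈ H₀ := projZ_spec hz hsup₀ hinf₀ ⟨a, haK⟩
    set t : ↥H₀ := ⟨a * ((w : Q))⁻¹, hspec⟩ with ht
    have htK : (Subgroup.inclusion hH₀K t : Q) = a * ((w : Q))⁻¹ := Subgroup.coe_inclusion hH₀K t
    have h1 : ((F H : {f : ↥H₀ →* ↥(zpowers z) // ∀ s ∈ T.subgroupOf H₀, f s = 1}) :
        ↥H₀ →* ↥(zpowers z)) t = w⁻¹ := by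
      show (projZ hz H.2.2.1 H.2.2.2).comp (Subgroup.inclusion hH₀K) t = w⁻¹
      rw [MonoidHom.comp_apply, projZ_eq_iff, htK]
      have hwi : ((w⁻¹ : ↥(zpowers z)) : Q)⁻¹ = (w : Q) := by simp
      rw [hwi]
      simpa using ha
    have hfun : ((F H : {f : ↥H₀ →* ↥(zpowers z) // ∀ s ∈ T.subgroupOf H₀, f s = 1}) :
        ↥H₀ →* ↥(zpowers z)) = ((F H' : {f : ↥H₀ →* ↥(zpowers z) // ∀ s ∈ T.subgroupOf H₀, f s = 1}) :
        ↥H₀ →* ↥(zpowers z)) := congrArg Subtype.val hFF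
    have h2 : ((F H' : {f : ↥H₀ →* ↥(zpowers z) // ∀ s ∈ T.subgroupOf H₀, f s = 1}) :
        ↥H₀ →* ↥(zpowers z)) t = w⁻¹ := hfun ▸ h1
    have h3 := (projZ_eq_iff hz H'.2.2.1 H'.2.2.2 (Subgroup.inclusion hH₀K t) w⁻¹).mp h2
    rw [htK] at h3
    have hwi : ((w⁻¹ : ↥(zpowers z)) : Q)⁻¹ = (w : Q) := by simp
    rw [hwi] at h3
    simpa using h3
  have hinj : Function.Injective F := fun H H' h =>
    Subtype.ext (le_antisymm (hle H H' h) (hle H' H h.symm))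
  have hZcard : Nat.card ↥(zpowers z) ≤ p := by
    rw [Nat.card_zpowers, hzp]
  haveI : Finite (↥H₀ →* ↥(zpowers z)) :=
    Finite.of_injective (fun f => (f : ↥H₀ → ↥(zpowers z))) DFunLike.coe_injective
  calc Nat.card {H : Subgroup Q // T ≤ H ∧ H ⊔ zpowers z = K ∧ H ⊓ zpowers z = ⊥}
      ≤ Nat.card {f : ↥H₀ →* ↥(zpowers z) // ∀ s ∈ T.subgroupOf H₀, f s = 1} :=
        Nat.card_le_card_of_injective F hinj
    _ ≤ (T.subgroupOf H₀).index :=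
        card_hom_le (T.subgroupOf H₀).index p hp ↥H₀ (hQ.to_subgroup H₀)
          ↥(zpowers z) hZcard (T.subgroupOf H₀) le_rfl
    _ = T.relIndex H₀ := rfl

lemma inf_zpowers_eq_bot {p : ℕ} (hp : p.Prime) {Q : Type u} [Group Q] [Finite Q]
    {z : Q} (hzp : orderOf z = p) {H : Subgroup Q} (hzH : z ∉ H) :
    H ⊓ zpowers z = ⊥ := by
  have hcardZ : Nat.card ↥(zpowers z) = p := by rw [Nat.card_zpowers, hzp]
  have hdvd : Nat.card ↥(H ⊓ zpowers z) ∣ p := by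
    rw [← hcardZ]
    exact Subgroup.card_dvd_of_le inf_le_right
  rcases (Nat.Prime.eq_one_or_self_of_dvd hp _ hdvd) with h1 | hpp
  · exact Subgroup.card_eq_one.mp h1
  · exfalso
    have hle : H ⊓ zpowers z ≤ zpowers z := inf_le_right
    have hcardEq : Nat.card ↥((H ⊓ zpowers z).subgroupOf (zpowers z)) = p := by
      rw [Nat.card_congr (Subgroup.subgroupOfEquivOfLe hle).toEquiv, hpp]
    have hidx : ((H ⊓ zpowers z).subgroupOf (zpowers z)).index = 1 := by
      have h := Subgroup.index_mul_card ((H ⊓ zpowers z).subgroupOf (zpowers z))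
      rw [hcardEq, hcardZ] at h
      have hp0 : p ≠ 0 := hp.pos.ne'
      have : ((H ⊓ zpowers z).subgroupOf (zpowers z)).index * p = 1 * p := by
        rw [h, one_mul]
      exact Nat.eq_of_mul_eq_mul_right hp.pos this
    have htop := Subgroup.subgroupOf_eq_top.mp (Subgroup.index_eq_one.mp hidx)
    exact hzH ((htop (Subgroup.mem_zpowers z)).1)

theorem aux (p : ℕ) (hp : p.Prime) : ∀ (n : ℕ) (P : Type u) [Group P] [Finite P],
    IsPGroup p P → ∀ (T : Subgroup P) (c k : ℕ), Nat.card P ≤ n →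
    T.index = p ^ c → k ≤ c →
    (({H : Subgroup P | T ≤ H ∧ H.index = p ^ k}.ncard : ℝ)) ≤ gaussBinom p c k := by
  intro n
  induction n with
  | zero =>
    intro P _ _ hP T c k hcard hT hk
    have : 0 < Nat.card P := Nat.card_pos
    omega
  | succ n IH =>
    intro P _ _ hP T c k hcard hT hk
    haveI : Fact p.Prime := ⟨hp⟩
    have hp2 := hp.two_le
    haveI : Finite (Subgroup P) :=
      Finite.of_injective (fun H : Subgroup P => (H : Set P)) SetLike.coe_injective
    rcases Nat.eq_zero_or_pos k with hk0 | hkpos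
    · -- k = 0
      subst hk0
      have hset : {H : Subgroup P | T ≤ H ∧ H.index = p ^ 0} = {(⊤ : Subgroup P)} := by
        ext H
        simp only [Set.mem_setOf_eq, Set.mem_singleton_iff, pow_zero, Subgroup.index_eq_one]
        exact ⟨fun h => h.2, fun h => ⟨h ▸ le_top, h⟩⟩
      rw [hset, Set.ncard_singleton, gauss_zero]
      norm_num
    rcases eq_or_lt_of_le hk with hkc | hklt
    · -- k = c : at most the single subgroup T
      subst hkc
      have hsub : {H : Subgroup P | T ≤ H ∧ H.index = p ^ k} ⊆ {T} := by
        rintro H ⟨hTH, hHi⟩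
        have h1 : T.relIndex H * H.index = T.index := Subgroup.relIndex_mul_index hTH
        rw [hT, hHi] at h1
        have hpk0 : 0 < p ^ k := pow_pos hp.pos k
        have hrel1 : T.relIndex H = 1 := by
          have : T.relIndex H * p ^ k = 1 * p ^ k := by rw [h1, one_mul]
          exact Nat.eq_of_mul_eq_mul_right hpk0 this
        have : H ≤ T := Subgroup.relIndex_eq_one.mp hrel1
        exact le_antisymm this hTH
      calc (({H : Subgroup P | T ≤ H ∧ H.index = p ^ k}.ncard : ℝ))
          ≤ (({T} : Set (Subgroup P)).ncard : ℝ) := by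
            exact_mod_cast Nat.cast_le.mpr (Set.ncard_le_ncard hsub (Set.toFinite _))
        _ = 1 := by rw [Set.ncard_singleton]; norm_num
        _ = gaussBinom p k k := (gauss_self hp2 k).symm
    · -- 1 ≤ k < c
      have hc1 : 1 ≤ c := by omega
      -- find central element of order p
      haveI : Nontrivial P := by
        rw [← Finite.one_lt_card_iff_nontrivial]
        have h1 := T.index_mul_card
        have h2 : 1 < p ^ c := by
          calc 1 < p := by omega
          _ = p ^ 1 := (pow_one p).symm
          _ ≤ p ^ c := Nat.pow_le_pow_right hp.pos hc1
        have h3 : 0 < Nat.card ↥T := Nat.card_pos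
        rw [hT] at h1
        nlinarith
      haveI := hP.center_nontrivial
      have hdvd : p ∣ Nat.card ↥(Subgroup.center P) := by
        obtain ⟨m, hm⟩ := IsPGroup.iff_card.mp (hP.to_subgroup (Subgroup.center P))
        have hm1 : 1 < Nat.card ↥(Subgroup.center P) := Finite.one_lt_card
        rw [hm] at hm1 ⊢
        have : m ≠ 0 := by
          intro h; rw [h, pow_zero] at hm1; omega
        exact dvd_pow_self p this
      obtain ⟨g, hg⟩ := exists_prime_orderOf_dvd_card' p hdvd
      set z : P := (g : P) with hzdef
      have hz : z ∈ Subgroup.center P := g.2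
      have hzp : orderOf z = p := by
        rw [hzdef, Subgroup.orderOf_coe, hg]
      haveI hZnormal : (zpowers z).Normal := zpowers_normal hz
      set π : P →* P ⧸ zpowers z := QuotientGroup.mk' (zpowers z) with hπdef
      have hπsur : Function.Surjective π := QuotientGroup.mk'_surjective (zpowers z)
      have hker : π.ker = zpowers z := QuotientGroup.ker_mk' (zpowers z)
      have hPQ : IsPGroup p (P ⧸ zpowers z) := hP.to_quotient (zpowers z)
      have hcardQ : Nat.card (P ⧸ zpowers z) ≤ n := by
        have h1 : Nat.card P = Nat.card (P ⧸ zpowers z) * Nat.card ↥(zpowers z) :=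
          Subgroup.card_eq_card_quotient_mul_card_subgroup (zpowers z)
        have h2 : Nat.card ↥(zpowers z) = p := by rw [Nat.card_zpowers, hzp]
        rw [h2] at h1
        have h3 : 0 < Nat.card (P ⧸ zpowers z) := Nat.card_pos
        have h4 : Nat.card (P ⧸ zpowers z) * 2 ≤ Nat.card (P ⧸ zpowers z) * p :=
          Nat.mul_le_mul_left _ hp2
        omega
      by_cases hzT : z ∈ T
      · -- z ∈ T : pass to the quotient
        have hZT : zpowers z ≤ T := Subgroup.zpowers_le.mpr hzT
        have hTmapidx : (T.map π).index = p ^ c := by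
          rw [Subgroup.index_map_eq T hπsur (by rw [hker]; exact hZT), hT]
        have hmaps : ∀ H ∈ {H : Subgroup P | T ≤ H ∧ H.index = p ^ k},
            H.map π ∈ {K' : Subgroup (P ⧸ zpowers z) | T.map π ≤ K' ∧ K'.index = p ^ k} := by
          rintro H ⟨hTH, hHi⟩
          refine ⟨Subgroup.map_mono hTH, ?_⟩
          rw [Subgroup.index_map_eq H hπsur (by rw [hker]; exact hZT.trans hTH), hHi]
        have hinj : Set.InjOn (fun H => Subgroup.map π H)
            {H : Subgroup P | T ≤ H ∧ H.index = p ^ k} := by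
          rintro H₁ ⟨h₁, -⟩ H₂ ⟨h₂, -⟩ heq
          have e₁ : Subgroup.comap π (Subgroup.map π H₁) = H₁ := by
            rw [Subgroup.comap_map_eq, hker, sup_eq_left]
            exact (Subgroup.zpowers_le.mpr hzT).trans h₁
          have e₂ : Subgroup.comap π (Subgroup.map π H₂) = H₂ := by
            rw [Subgroup.comap_map_eq, hker, sup_eq_left]
            exact (Subgroup.zpowers_le.mpr hzT).trans h₂
          have heq' : Subgroup.map π H₁ = Subgroup.map π H₂ := heq
          rw [← e₁, ← e₂, heq']
        have hle := Set.ncard_le_ncard_of_injOn _ hmaps hinj (Set.toFinite _)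
        have hIH := IH (P ⧸ zpowers z) hPQ (T.map π) c k hcardQ hTmapidx hk
        calc (({H : Subgroup P | T ≤ H ∧ H.index = p ^ k}.ncard : ℝ))
            ≤ (({K' : Subgroup (P ⧸ zpowers z) | T.map π ≤ K' ∧ K'.index = p ^ k}.ncard : ℝ)) := by
              exact_mod_cast hle
          _ ≤ gaussBinom p c k := hIH
      · -- z ∉ T
        have hTZbot : T ⊓ zpowers z = ⊥ := inf_zpowers_eq_bot hp hzp hzT
        have hTZrel : T.relIndex (T ⊔ zpowers z) = p := by
          rw [relindex_compl hz rfl hTZbot, hzp]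
        have hTZidx : (T ⊔ zpowers z).index = p ^ (c - 1) := by
          have h1 : T.relIndex (T ⊔ zpowers z) * (T ⊔ zpowers z).index = T.index :=
            Subgroup.relIndex_mul_index le_sup_left
          rw [hTZrel, hT] at h1
          have h2 : p * p ^ (c - 1) = p ^ c := by
            rw [← pow_succ']
            congr 1
            omega
          have h3 : p * (T ⊔ zpowers z).index = p * p ^ (c - 1) := by rw [h1, h2]
          exact Nat.eq_of_mul_eq_mul_left hp.pos h3
        have hTZmapidx : ((T ⊔ zpowers z).map π).index = p ^ (c - 1) := by
          rw [Subgroup.index_map_eq _ hπsur (by rw [hker]; exact le_sup_right), hTZidx]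
        -- split into A (z ∈ H) and B (z ∉ H)
        set A : Set (Subgroup P) := {H | (T ≤ H ∧ H.index = p ^ k) ∧ z ∈ H} with hAdef
        set B : Set (Subgroup P) := {H | (T ≤ H ∧ H.index = p ^ k) ∧ z ∉ H} with hBdef
        have hunion : {H : Subgroup P | T ≤ H ∧ H.index = p ^ k} = A ∪ B := by
          ext H
          simp only [hAdef, hBdef, Set.mem_setOf_eq, Set.mem_union]
          tauto
        have hdisj : Disjoint A B := by
          rw [Set.disjoint_left]
          rintro H ⟨-, hzH⟩ ⟨-, hzH'⟩
          exact hzH' hzH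
        have hcardsum : {H : Subgroup P | T ≤ H ∧ H.index = p ^ k}.ncard
            = A.ncard + B.ncard := by
          rw [hunion]
          exact Set.ncard_union_eq hdisj (Set.toFinite _) (Set.toFinite _)
        -- bound A
        have hAbound : (A.ncard : ℝ) ≤ gaussBinom p (c - 1) k := by
          have hmaps : ∀ H ∈ A, H.map π ∈
              {K' : Subgroup (P ⧸ zpowers z) |
                (T ⊔ zpowers z).map π ≤ K' ∧ K'.index = p ^ k} := by
            rintro H ⟨⟨hTH, hHi⟩, hzH⟩
            have hZH : zpowers z ≤ H := Subgroup.zpowers_le.mpr hzH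
            refine ⟨Subgroup.map_mono (sup_le hTH hZH), ?_⟩
            rw [Subgroup.index_map_eq H hπsur (by rw [hker]; exact hZH), hHi]
          have hinj : Set.InjOn (fun H => Subgroup.map π H) A := by
            rintro H₁ ⟨⟨-, -⟩, hz₁⟩ H₂ ⟨⟨-, -⟩, hz₂⟩ heq
            have e₁ : Subgroup.comap π (Subgroup.map π H₁) = H₁ := by
              rw [Subgroup.comap_map_eq, hker, sup_eq_left]
              exact Subgroup.zpowers_le.mpr hz₁
            have e₂ : Subgroup.comap π (Subgroup.map π H₂) = H₂ := by
              rw [Subgroup.comap_map_eq, hker, sup_eq_left]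
              exact Subgroup.zpowers_le.mpr hz₂
            have heq' : Subgroup.map π H₁ = Subgroup.map π H₂ := heq
            rw [← e₁, ← e₂, heq']
          have hle := Set.ncard_le_ncard_of_injOn _ hmaps hinj (Set.toFinite _)
          have hIH := IH (P ⧸ zpowers z) hPQ ((T ⊔ zpowers z).map π) (c - 1) k hcardQ
            hTZmapidx (by omega)
          calc (A.ncard : ℝ) ≤ (({K' : Subgroup (P ⧸ zpowers z) |
                (T ⊔ zpowers z).map π ≤ K' ∧ K'.index = p ^ k}.ncard : ℝ)) := by
                exact_mod_cast hle
            _ ≤ gaussBinom p (c - 1) k := hIH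
        -- bound B
        have hBbound : (B.ncard : ℝ) ≤ (p : ℝ) ^ (c - k) * gaussBinom p (c - 1) (k - 1) := by
          classical
          set Bs : Finset (Subgroup P) := B.toFinite.toFinset with hBsdef
          have hBcard : B.ncard = Bs.card := Set.ncard_eq_toFinset_card B B.toFinite
          set f : Subgroup P → Subgroup (P ⧸ zpowers z) := fun H => Subgroup.map π H with hfdef
          -- each H ∈ B gives H ⊔ Z of index p^(k-1)
          have hHZidx : ∀ H ∈ B, (H ⊔ zpowers z).index = p ^ (k - 1) := by
            rintro H ⟨⟨hTH, hHi⟩, hzH⟩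
            have hHZbot : H ⊓ zpowers z = ⊥ := inf_zpowers_eq_bot hp hzp hzH
            have h1 : H.relIndex (H ⊔ zpowers z) * (H ⊔ zpowers z).index = H.index :=
              Subgroup.relIndex_mul_index le_sup_left
            have h2 : H.relIndex (H ⊔ zpowers z) = p := by
              rw [relindex_compl hz rfl hHZbot, hzp]
            rw [h2, hHi] at h1
            have h3 : p * p ^ (k - 1) = p ^ k := by
              rw [← pow_succ']
              congr 1
              omega
            have h4 : p * (H ⊔ zpowers z).index = p * p ^ (k - 1) := by rw [h1, h3]
            exact Nat.eq_of_mul_eq_mul_left hp.pos h4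
          have hmapidx : ∀ H ∈ B, (f H).index = p ^ (k - 1) := by
            intro H hH
            have := Subgroup.index_map (f := π) (H := H)
            rw [MonoidHom.range_eq_top_of_surjective _ hπsur, Subgroup.index_top, mul_one,
              hker] at this
            rw [hfdef]
            simp only
            rw [this]
            exact hHZidx H hH
          have hmapge : ∀ H ∈ B, (T ⊔ zpowers z).map π ≤ f H := by
            rintro H ⟨⟨hTH, -⟩, -⟩
            have h1 : (T ⊔ zpowers z).map π ≤ (H ⊔ zpowers z).map π :=
              Subgroup.map_mono (sup_le (hTH.trans le_sup_left) le_sup_right)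
            have h2 : (H ⊔ zpowers z).map π = H.map π := by
              rw [Subgroup.map_sup]
              have : (zpowers z).map π = ⊥ := by
                rw [Subgroup.map_eq_bot_iff, hker]
              rw [this, sup_bot_eq]
            rw [h2] at h1
            exact h1
          -- fibers of f on B have size at most p^(c-k)
          have hfiber : ∀ K' ∈ Bs.image f, (Bs.filter (fun H => f H = K')).card ≤ p ^ (c - k) := by
            intro K' hK'
            obtain ⟨H₀, hH₀Bs, hH₀K'⟩ := Finset.mem_image.mp hK'
            have hH₀B : H₀ ∈ B := (Set.Finite.mem_toFinset _).mp hH₀Bs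
            obtain ⟨⟨hTH₀, hH₀i⟩, hzH₀⟩ := hH₀B
            have hH₀bot : H₀ ⊓ zpowers z = ⊥ := inf_zpowers_eq_bot hp hzp hzH₀
            set K₀ : Subgroup P := Subgroup.comap π K' with hK₀def
            have hsup₀ : H₀ ⊔ zpowers z = K₀ := by
              rw [hK₀def, ← hH₀K', hfdef]
              simp only
              rw [Subgroup.comap_map_eq, hker]
            have hrelidx : T.relIndex H₀ = p ^ (c - k) := by
              have h1 : T.relIndex H₀ * H₀.index = T.index :=
                Subgroup.relIndex_mul_index hTH₀
              rw [hH₀i, hT] at h1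
              have h2 : p ^ (c - k) * p ^ k = p ^ c := by
                rw [← pow_add]
                congr 1
                omega
              have h3 : T.relIndex H₀ * p ^ k = p ^ (c - k) * p ^ k := by rw [h1, h2]
              exact Nat.eq_of_mul_eq_mul_right (pow_pos hp.pos k) h3
            have hsubset : Bs.filter (fun H => f H = K') ⊆
                ({H : Subgroup P | T ≤ H ∧ H ⊔ zpowers z = K₀ ∧
                  H ⊓ zpowers z = ⊥}).toFinite.toFinset := by
              intro H hH
              obtain ⟨hHBs, hfH⟩ := Finset.mem_filter.mp hH
              have hHB : H ∈ B := (Set.Finite.mem_toFinset _).mp hHBs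
              obtain ⟨⟨hTH, hHi⟩, hzH⟩ := hHB
              rw [Set.Finite.mem_toFinset]
              refine ⟨hTH, ?_, inf_zpowers_eq_bot hp hzp hzH⟩
              rw [hK₀def, ← hfH, hfdef]
              simp only
              rw [Subgroup.comap_map_eq, hker]
            calc (Bs.filter (fun H => f H = K')).card
                ≤ ({H : Subgroup P | T ≤ H ∧ H ⊔ zpowers z = K₀ ∧
                    H ⊓ zpowers z = ⊥}).toFinite.toFinset.card := Finset.card_le_card hsubset
              _ = ({H : Subgroup P | T ≤ H ∧ H ⊔ zpowers z = K₀ ∧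
                    H ⊓ zpowers z = ⊥}).ncard :=
                  (Set.ncard_eq_toFinset_card _ _).symm
              _ = Nat.card {H : Subgroup P // T ≤ H ∧ H ⊔ zpowers z = K₀ ∧
                    H ⊓ zpowers z = ⊥} := (Nat.card_coe_set_eq _).symm
              _ ≤ T.relIndex H₀ := fiber_card hp hP hz hzp T K₀ H₀ hTH₀ hsup₀ hH₀bot
              _ = p ^ (c - k) := hrelidx
          have hBile := Finset.card_le_mul_card_image Bs (p ^ (c - k)) hfiber
          -- the image is contained in the quotient target set
          have himgsub : Bs.image f ⊆
              ({K' : Subgroup (P ⧸ zpowers z) | (T ⊔ zpowers z).map π ≤ K' ∧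
                K'.index = p ^ (k - 1)}).toFinite.toFinset := by
            intro K' hK'
            obtain ⟨H, hHBs, hHK'⟩ := Finset.mem_image.mp hK'
            have hHB : H ∈ B := (Set.Finite.mem_toFinset _).mp hHBs
            rw [Set.Finite.mem_toFinset]
            exact ⟨hHK' ▸ hmapge H hHB, hHK' ▸ hmapidx H hHB⟩
          have himgcard : (Bs.image f).card ≤
              ({K' : Subgroup (P ⧸ zpowers z) | (T ⊔ zpowers z).map π ≤ K' ∧
                K'.index = p ^ (k - 1)}).ncard := by
            rw [Set.ncard_eq_toFinset_card _ (Set.toFinite _)]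
            exact Finset.card_le_card himgsub
          have hIH := IH (P ⧸ zpowers z) hPQ ((T ⊔ zpowers z).map π) (c - 1) (k - 1) hcardQ
            hTZmapidx (by omega)
          have hc1' : (0:ℝ) ≤ (p : ℝ) ^ (c - k) := by positivity
          calc (B.ncard : ℝ) = (Bs.card : ℝ) := by rw [hBcard]
            _ ≤ ((p ^ (c - k) * (Bs.image f).card : ℕ) : ℝ) := by exact_mod_cast hBile
            _ = (p : ℝ) ^ (c - k) * ((Bs.image f).card : ℝ) := by push_cast; ring
            _ ≤ (p : ℝ) ^ (c - k) * (({K' : Subgroup (P ⧸ zpowers z) |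
                  (T ⊔ zpowers z).map π ≤ K' ∧ K'.index = p ^ (k - 1)}).ncard : ℝ) := by
                apply mul_le_mul_of_nonneg_left _ hc1'
                exact_mod_cast himgcard
            _ ≤ (p : ℝ) ^ (c - k) * gaussBinom p (c - 1) (k - 1) :=
                mul_le_mul_of_nonneg_left hIH hc1'
        -- combine with the Pascal identity
        have hpascal := gauss_pascal (p := p) hp2 (c := c - 1) (k := k - 1) (by omega)
        have hc' : c - 1 + 1 = c := by omega
        have hk' : k - 1 + 1 = k := by omega
        have hck : c - 1 - (k - 1) = c - k := by omega
        rw [hc', hk', hck] at hpascal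
        calc (({H : Subgroup P | T ≤ H ∧ H.index = p ^ k}.ncard : ℝ))
            = (A.ncard : ℝ) + (B.ncard : ℝ) := by rw [hcardsum]; push_cast; ring
          _ ≤ gaussBinom p (c - 1) k + (p : ℝ) ^ (c - k) * gaussBinom p (c - 1) (k - 1) :=
              add_le_add hAbound hBbound
          _ = gaussBinom p c k := hpascal.symm

end GaussAux

/-- In a finite `p`-group `P` with `T ≤ P` of index `p^c`, the number of subgroups containing
`T` of index `p^k` is at most the Gaussian binomial `binom_p(c, k)`. -/
theorem card_sub_index_le_gaussBinom (p : ℕ) (hp : p.Prime) (P : Type*) [Group P] [Finite P]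
    (hP : IsPGroup p P) (T : Subgroup P) (c k : ℕ) (hT : T.index = p ^ c) (hk : k ≤ c) :
    ({H : Subgroup P | T ≤ H ∧ H.index = p ^ k}.ncard : ℝ) ≤ gaussBinom p c k :=
  GaussAux.aux p hp (Nat.card P) P hP T c k le_rfl hT hk
end

section
/- Let P be a finite p-group and T ≤ P with [P:T] = p^c. Then the total number of subgroups of P containing T is at most ∑_{k=0}^{c} binom_p(c,k), the sum of Gaussian binomial coefficients. -/
open Finset

namespace CardSubAux

/-- Natural-number Gaussian binomial coefficients, via the q-Pascal recurrence. -/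
def gb (p : ℕ) : ℕ → ℕ → ℕ
  | _, 0 => 1
  | 0, _ + 1 => 0
  | c + 1, k + 1 => gb p c (k + 1) + p ^ (c - k) * gb p c k

variable {p : ℕ}

lemma gb_zero (p c : ℕ) : gb p c 0 = 1 := by cases c <;> rfl

lemma gb_of_lt : ∀ {c k : ℕ}, c < k → gb p c k = 0
  | 0, _ + 1, _ => rfl
  | c + 1, k + 1, h => by
    rw [show gb p (c+1) (k+1) = gb p c (k+1) + p ^ (c - k) * gb p c k from rfl,
      gb_of_lt (by omega), gb_of_lt (by omega), mul_zero, add_zero]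

lemma gb_self : ∀ c : ℕ, gb p c c = 1
  | 0 => rfl
  | c + 1 => by
    rw [show gb p (c+1) (c+1) = gb p c (c+1) + p ^ (c - c) * gb p c c from rfl,
      gb_of_lt (Nat.lt_succ_self c), gb_self c, Nat.sub_self, pow_zero]
    omega

lemma gb_mul_eq (c : ℕ) : ∀ k : ℕ,
    (gb p c k : ℝ) * ∏ i ∈ range k, ((p : ℝ) ^ (i + 1) - 1)
      = ∏ i ∈ range k, ((p : ℝ) ^ (c - i) - 1) := by
  induction c with
  | zero =>
    intro k
    cases k with
    | zero => simp [gb_zero]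
    | succ k =>
      have hz : ∏ i ∈ range (k+1), ((p:ℝ) ^ (0 - i) - 1) = 0 :=
        Finset.prod_eq_zero (Finset.mem_range.mpr (Nat.succ_pos k)) (by norm_num)
      rw [gb_of_lt (by omega), hz]
      simp
  | succ c IH =>
    intro k
    cases k with
    | zero => simp [gb_zero]
    | succ k =>
      by_cases hkc : k ≤ c
      · have e1 : ∏ i ∈ range (k+1), ((p:ℝ) ^ (c + 1 - i) - 1)
            = ((p:ℝ) ^ (c+1) - 1) * ∏ i ∈ range k, ((p:ℝ) ^ (c - i) - 1) := by
          rw [Finset.prod_range_succ']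
          simp only [Nat.succ_sub_succ, Nat.sub_zero]
          ring
        have e2 : ∏ i ∈ range (k+1), ((p:ℝ) ^ (i + 1) - 1)
            = (∏ i ∈ range k, ((p:ℝ) ^ (i + 1) - 1)) * ((p:ℝ) ^ (k+1) - 1) :=
          Finset.prod_range_succ _ _
        have e3 : ∏ i ∈ range (k+1), ((p:ℝ) ^ (c - i) - 1)
            = (∏ i ∈ range k, ((p:ℝ) ^ (c - i) - 1)) * ((p:ℝ) ^ (c - k) - 1) :=
          Finset.prod_range_succ _ _
        have e4 : (p:ℝ) ^ (c - k) * (p:ℝ) ^ (k + 1) = (p:ℝ) ^ (c + 1) := by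
          rw [← pow_add]; congr 1; omega
        have h1 := IH (k+1)
        have h2 := IH k
        rw [show gb p (c+1) (k+1) = gb p c (k+1) + p ^ (c - k) * gb p c k from rfl, e1, ← e4]
        push_cast
        rw [e2] at h1 ⊢
        rw [e3] at h1
        linear_combination h1 + (p:ℝ) ^ (c - k) * ((p:ℝ) ^ (k+1) - 1) * h2
      · have hz : ∏ i ∈ range (k+1), ((p:ℝ) ^ (c + 1 - i) - 1) = 0 :=
          Finset.prod_eq_zero (i := c + 1) (Finset.mem_range.mpr (by omega))
            (by rw [Nat.sub_self, pow_zero]; ring)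
        rw [gb_of_lt (by omega), hz]
        simp

lemma gb_cast (hp2 : 2 ≤ p) (c k : ℕ) : (gb p c k : ℝ) = gaussBinom p c k := by
  have hD : 0 < ∏ i ∈ range k, ((p : ℝ) ^ (i + 1) - 1) := by
    apply Finset.prod_pos
    intro i _
    have h2 : (2:ℝ) ≤ (p:ℝ) := by exact_mod_cast hp2
    have : (p:ℝ) ≤ (p:ℝ) ^ (i + 1) := le_self_pow₀ (by linarith) (by omega)
    linarith
  rw [gaussBinom, Finset.prod_div_distrib, eq_div_iff hD.ne']
  exact gb_mul_eq c k

end CardSubAux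

namespace CardSubAux

open Subgroup Pointwise

variable {G : Type*} [Group G]

lemma normal_zpowers_of_mem_center {g : G} (hg : g ∈ Subgroup.center G) :
    (Subgroup.zpowers g).Normal := by
  constructor
  rintro n ⟨m, rfl⟩ x
  have hc : (g ^ m : G) ∈ Subgroup.center G := Subgroup.zpow_mem _ hg m
  have hx : x * g ^ m * x⁻¹ = g ^ m := by
    rw [Subgroup.mem_center_iff.mp hc x]; group
  rw [hx]
  exact Subgroup.zpow_mem _ (Subgroup.mem_zpowers g) m

lemma inf_zpowers_eq_bot [Finite G] {p : ℕ} (hp : p.Prime) {g : G}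
    (hgo : orderOf g = p) {H : Subgroup G} (hgH : g ∉ H) :
    Subgroup.zpowers g ⊓ H = ⊥ := by
  have h1 : Nat.card (Subgroup.zpowers g ⊓ H : Subgroup G) ∣ p := by
    have := Subgroup.card_dvd_of_le
      (inf_le_left : Subgroup.zpowers g ⊓ H ≤ Subgroup.zpowers g)
    rwa [Nat.card_zpowers, hgo] at this
  rcases hp.eq_one_or_self_of_dvd _ h1 with h | h
  · exact Subgroup.card_eq_one.mp h
  · exfalso
    have heq : Subgroup.zpowers g ⊓ H = Subgroup.zpowers g :=
      Subgroup.eq_of_le_of_card_ge inf_le_left (by rw [Nat.card_zpowers, hgo, h])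
    have h2 : Subgroup.zpowers g ≤ H := by rw [← heq]; exact inf_le_right
    exact hgH (h2 (Subgroup.mem_zpowers g))

lemma card_mul_of_sup_eq_top [Finite G] {p : ℕ} (hp : p.Prime) {g : G}
    (hgc : g ∈ Subgroup.center G) (hgo : orderOf g = p) {H : Subgroup G} (hgH : g ∉ H)
    (hsup : H ⊔ Subgroup.zpowers g = ⊤) : Nat.card H * p = Nat.card G := by
  haveI := normal_zpowers_of_mem_center hgc
  have hdis : Disjoint H (Subgroup.zpowers g) := by
    rw [disjoint_iff, inf_comm]
    exact inf_zpowers_eq_bot hp hgo hgH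
  have hmul : (H : Set G) * (Subgroup.zpowers g : Set G) = Set.univ := by
    rw [← Subgroup.mul_normal, hsup, Subgroup.coe_top]
  have hcompl : Subgroup.IsComplement' H (Subgroup.zpowers g) :=
    Subgroup.isComplement'_of_disjoint_and_mul_eq_univ hdis hmul
  have := hcompl.card_mul
  rwa [Nat.card_zpowers, hgo] at this

lemma index_sup_zpowers [Finite G] {p : ℕ} (hp : p.Prime) {g : G}
    (hgc : g ∈ Subgroup.center G) (hgo : orderOf g = p) {H : Subgroup G} (hgH : g ∉ H)
    {t : ℕ} (hH : H.index = p ^ t) :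
    ∃ s, t = s + 1 ∧ (H ⊔ Subgroup.zpowers g).index = p ^ s := by
  haveI := normal_zpowers_of_mem_center hgc
  set K := H ⊔ Subgroup.zpowers g with hK
  have hHK : H ≤ K := le_sup_left
  have h1 : H.relIndex K * K.index = p ^ t := by rw [Subgroup.relIndex_mul_index hHK, hH]
  have hne1 : H.relIndex K ≠ 1 := by
    intro h
    exact hgH ((Subgroup.relIndex_eq_one.mp h) (Subgroup.mem_sup_right (Subgroup.mem_zpowers g)))
  have hcardK : Nat.card K ≤ Nat.card H * p := by
    have hset : (K : Set G) = (H : Set G) * (Subgroup.zpowers g : Set G) :=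
      Subgroup.mul_normal H _
    have hle := Set.natCard_mul_le (s := (H : Set G)) (t := ((Subgroup.zpowers g : Subgroup G) : Set G))
    rw [← hset] at hle
    simpa [Nat.card_zpowers, hgo] using hle
  have h2 : Nat.card H * H.relIndex K = Nat.card K := by
    have := Subgroup.card_mul_index (H.subgroupOf K)
    rwa [Nat.card_congr (Subgroup.subgroupOfEquivOfLe hHK).toEquiv] at this
  have hHpos : 0 < Nat.card H := Nat.card_pos
  have hrel_le : H.relIndex K ≤ p := by nlinarith
  have hrel_dvd : H.relIndex K ∣ p ^ t := ⟨K.index, h1.symm⟩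
  obtain ⟨u, hu_le, hu⟩ := (Nat.dvd_prime_pow hp).mp hrel_dvd
  have h2le : 2 ≤ p := hp.two_le
  have hu1 : u = 1 := by
    rcases u with _ | _ | u
    · rw [pow_zero] at hu; exact absurd hu hne1
    · rfl
    · exfalso
      have hple : p ^ (u + 2) ≤ p := hu ▸ hrel_le
      have : p ^ 2 ≤ p ^ (u + 2) := Nat.pow_le_pow_right hp.pos (by omega)
      nlinarith
  have hrelp : H.relIndex K = p := by rw [hu, hu1, pow_one]
  rw [hrelp] at h1
  have ht0 : t ≠ 0 := by
    rintro rfl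
    rw [pow_zero] at h1
    have : p ∣ 1 := ⟨K.index, h1.symm⟩
    have := Nat.le_of_dvd one_pos this
    omega
  refine ⟨t - 1, by omega, ?_⟩
  have hpt : p ^ t = p * p ^ (t - 1) := by
    rw [← pow_succ']
    congr 1
    omega
  exact Nat.eq_of_mul_eq_mul_left hp.pos (h1.trans hpt)

lemma exists_generators [Finite G] {p : ℕ} (hp : p.Prime) :
    ∀ (r : ℕ) (U : Subgroup G), U.index ∣ p ^ r →
      ∃ x : Fin r → G, U ⊔ Subgroup.closure (Set.range x) = ⊤ := by
  intro r
  induction r with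
  | zero =>
    intro U hU
    refine ⟨Fin.elim0, ?_⟩
    have : U = ⊤ := Subgroup.index_eq_one.mp (Nat.dvd_one.mp (by simpa using hU))
    simp [this]
  | succ r IH =>
    intro U hU
    by_cases hUtop : U = ⊤
    · refine ⟨fun _ => 1, ?_⟩
      simp [hUtop]
    · obtain ⟨y, hy⟩ : ∃ y, y ∉ U := by
        by_contra h
        push_neg at h
        exact hUtop ((Subgroup.eq_top_iff' U).mpr h)
      set U' := U ⊔ Subgroup.zpowers y with hU'def
      have hUU' : U ≤ U' := le_sup_left
      have hdvd : U'.index ∣ U.index := Subgroup.index_dvd_of_le hUU'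
      have hne : U'.index ≠ U.index := by
        intro h
        have hind : U.relIndex U' * U'.index = U.index := Subgroup.relIndex_mul_index hUU'
        have h0 : U'.index ≠ 0 := Subgroup.index_ne_zero_of_finite
        have hrel1 : U.relIndex U' = 1 := by
          rw [h] at hind
          have hpos : 0 < U.index := Nat.pos_of_ne_zero (by rw [← h]; exact h0)
          exact Nat.eq_of_mul_eq_mul_right hpos (hind.trans (one_mul _).symm)
        exact hy ((Subgroup.relIndex_eq_one.mp hrel1) (Subgroup.mem_sup_right (Subgroup.mem_zpowers y)))
      obtain ⟨t, ht_le, ht⟩ := (Nat.dvd_prime_pow hp).mp hU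
      obtain ⟨s, hs_le, hs⟩ := (Nat.dvd_prime_pow hp).mp (hdvd.trans hU)
      have hst : s < t := by
        have : p ^ s ∣ p ^ t := by rw [← hs, ← ht]; exact hdvd
        have hle' : s ≤ t := (Nat.pow_dvd_pow_iff_le_right hp.one_lt).mp this
        rcases hle'.lt_or_eq with h | h
        · exact h
        · exact absurd (by rw [hs, ht, h]) hne
      have hU'dvd : U'.index ∣ p ^ r := by
        rw [hs]
        exact pow_dvd_pow p (by omega)
      obtain ⟨x, hx⟩ := IH U' hU'dvd
      refine ⟨Fin.cons y x, ?_⟩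
      rw [Fin.range_cons, Set.insert_eq, Subgroup.closure_union, ← Subgroup.zpowers_eq_closure,
        ← sup_assoc]
      exact hx

end CardSubAux

namespace CardSubAux

open Subgroup Pointwise

lemma fiber_bound {G : Type*} [Group G] [Finite G] {p : ℕ} (hp : p.Prime) {g : G}
    (hgc : g ∈ Subgroup.center G) (hgo : orderOf g = p) (T : Subgroup G) {r : ℕ}
    (hr : (T ⊔ Subgroup.zpowers g).index ∣ p ^ r) :
    Nat.card {H : Subgroup G // T ≤ H ∧ g ∉ H ∧ H ⊔ Subgroup.zpowers g = ⊤} ≤ p ^ r := by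
  haveI := normal_zpowers_of_mem_center hgc
  obtain ⟨x, hx⟩ := exists_generators hp r (T ⊔ Subgroup.zpowers g) hr
  have key : ∀ (H : {H : Subgroup G // T ≤ H ∧ g ∉ H ∧ H ⊔ Subgroup.zpowers g = ⊤})
      (i : Fin r), ∃ nh : Subgroup.zpowers g × G, nh.2 ∈ H.1 ∧ x i = nh.2 * (nh.1 : G) := by
    rintro ⟨H, hTH, hgH, hHN⟩ i
    have hx_mem : x i ∈ (H : Set G) * (Subgroup.zpowers g : Set G) := by
      rw [← Subgroup.mul_normal H (Subgroup.zpowers g), hHN]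
      trivial
    obtain ⟨h, hh, nn, hnn, hmul⟩ := hx_mem
    exact ⟨(⟨nn, hnn⟩, h), hh, hmul.symm⟩
  choose F hFmem hFeq using key
  have main : ∀ H : {H : Subgroup G // T ≤ H ∧ g ∉ H ∧ H ⊔ Subgroup.zpowers g = ⊤},
      H.1 = T ⊔ Subgroup.closure (Set.range fun i => x i * (((F H i).1 : G))⁻¹) := by
    intro H
    set M := T ⊔ Subgroup.closure (Set.range fun i => x i * (((F H i).1 : G))⁻¹) with hM
    have hMH : M ≤ H.1 := by
      apply sup_le H.2.1
      rw [Subgroup.closure_le]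
      rintro _ ⟨i, rfl⟩
      have h1 := hFmem H i
      have h2 := hFeq H i
      show x i * (((F H i).1 : G))⁻¹ ∈ H.1
      rw [h2]
      simpa using h1
    have hMN : M ⊔ Subgroup.zpowers g = ⊤ := by
      rw [eq_top_iff, ← hx]
      apply sup_le
      · exact sup_le_sup_right (le_sup_left : T ≤ M) _
      · rw [Subgroup.closure_le]
        rintro _ ⟨i, rfl⟩
        have hxi : x i = (x i * (((F H i).1 : G))⁻¹) * ((F H i).1 : G) := by group
        rw [hxi]
        exact mul_mem
          (Subgroup.mem_sup_left
            (Subgroup.mem_sup_right (Subgroup.subset_closure (Set.mem_range_self i))))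
          (Subgroup.mem_sup_right ((F H i).1).2)
    have hcard1 : Nat.card H.1 * p = Nat.card G :=
      card_mul_of_sup_eq_top hp hgc hgo H.2.2.1 H.2.2.2
    have hcardM : Nat.card G ≤ Nat.card M * p := by
      have hset : ((M ⊔ Subgroup.zpowers g : Subgroup G) : Set G)
          = (M : Set G) * (Subgroup.zpowers g : Set G) := Subgroup.mul_normal M _
      have hle := Set.natCard_mul_le (s := (M : Set G))
        (t := ((Subgroup.zpowers g : Subgroup G) : Set G))
      rw [← hset, hMN] at hle
      simpa [Nat.card_zpowers, hgo] using hle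
    have hHM : Nat.card H.1 ≤ Nat.card M :=
      Nat.le_of_mul_le_mul_right (by omega) hp.pos
    exact (Subgroup.eq_of_le_of_card_ge hMH hHM).symm
  have hinj : Function.Injective
      (fun H : {H : Subgroup G // T ≤ H ∧ g ∉ H ∧ H ⊔ Subgroup.zpowers g = ⊤} =>
        (fun i => (F H i).1 : Fin r → Subgroup.zpowers g)) := by
    intro H1 H2 heq
    apply Subtype.ext
    rw [main H1, main H2]
    have : (fun i => x i * (((F H1 i).1 : G))⁻¹) = fun i => x i * (((F H2 i).1 : G))⁻¹ := by
      funext i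
      have h3 : (F H1 i).1 = (F H2 i).1 := congrFun heq i
      rw [h3]
    rw [this]
  calc Nat.card {H : Subgroup G // T ≤ H ∧ g ∉ H ∧ H ⊔ Subgroup.zpowers g = ⊤}
      ≤ Nat.card (Fin r → Subgroup.zpowers g) := Nat.card_le_card_of_injective _ hinj
    _ = p ^ r := by
        rw [Nat.card_fun, Nat.card_zpowers, hgo, Nat.card_eq_fintype_card, Fintype.card_fin]

lemma card_eq_sum_fibers {α β : Type*} [Finite α] [Fintype β] (f : α → β) :
    Nat.card α = ∑ b : β, Nat.card {a // f a = b} := by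
  classical
  have e : (Σ b : β, {a // f a = b}) ≃ α := Equiv.sigmaFiberEquiv f
  rw [← Nat.card_congr e]
  letI : Fintype α := Fintype.ofFinite α
  letI : ∀ b, Fintype {a // f a = b} := fun b => Fintype.ofFinite _
  simp [Nat.card_eq_fintype_card, Fintype.card_sigma]

lemma card_le_mul_of_fibers {α β : Type*} [Finite α] [Finite β] (f : α → β) {m : ℕ}
    (h : ∀ b, Nat.card {a // f a = b} ≤ m) : Nat.card α ≤ Nat.card β * m := by
  classical
  letI : Fintype β := Fintype.ofFinite β
  rw [card_eq_sum_fibers f]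
  calc ∑ b : β, Nat.card {a // f a = b} ≤ ∑ _b : β, m := Finset.sum_le_sum fun b _ => h b
    _ = Fintype.card β * m := by rw [Finset.sum_const, Finset.card_univ, smul_eq_mul]
    _ = Nat.card β * m := by rw [Nat.card_eq_fintype_card]

instance finite_subgroup {G : Type*} [Group G] [Finite G] : Finite (Subgroup G) :=
  Finite.of_injective (fun H => (H : Set G)) SetLike.coe_injective

lemma quotient_count {P : Type*} [Group P] [Finite P] (N T : Subgroup P) [N.Normal]
    (hNT : N ≤ T) (d : ℕ) :
    Nat.card {H : Subgroup P // T ≤ H ∧ H.index = d} ≤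
      Nat.card {H' : Subgroup (P ⧸ N) //
        T.map (QuotientGroup.mk' N) ≤ H' ∧ H'.index = d} := by
  apply Nat.card_le_card_of_injective
    (f := fun H => ⟨H.1.map (QuotientGroup.mk' N),
      Subgroup.map_mono H.2.1,
      by
        have := Subgroup.index_map_eq (H := (H : Subgroup P))
          (QuotientGroup.mk'_surjective N)
          (by rw [QuotientGroup.ker_mk']; exact hNT.trans H.2.1)
        rw [this]
        exact H.2.2⟩)
  intro H1 H2 h
  apply Subtype.ext
  have h' : H1.1.map (QuotientGroup.mk' N) = H2.1.map (QuotientGroup.mk' N) :=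
    congrArg Subtype.val h
  have k1 : (QuotientGroup.mk' N).ker ≤ H1.1 := by
    rw [QuotientGroup.ker_mk']; exact hNT.trans H1.2.1
  have k2 : (QuotientGroup.mk' N).ker ≤ H2.1 := by
    rw [QuotientGroup.ker_mk']; exact hNT.trans H2.2.1
  exact Subgroup.map_injective_of_ker_le _ k1 k2 h'

lemma zpowers_subgroupOf {G : Type*} [Group G] {g : G} {K : Subgroup G} (hg : g ∈ K) :
    Subgroup.zpowers (⟨g, hg⟩ : K) = (Subgroup.zpowers g).subgroupOf K := by
  ext x
  simp only [Subgroup.mem_subgroupOf, Subgroup.mem_zpowers_iff]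
  constructor
  · rintro ⟨m, rfl⟩
    exact ⟨m, by simp⟩
  · rintro ⟨m, hm⟩
    exact ⟨m, Subtype.ext (by simpa using hm)⟩

lemma mem_center_subgroup {G : Type*} [Group G] {g : G} {K : Subgroup G}
    (hg : g ∈ Subgroup.center G) (hgK : g ∈ K) : (⟨g, hgK⟩ : K) ∈ Subgroup.center K :=
  Subgroup.mem_center_iff.mpr fun y =>
    Subtype.ext (by simpa using Subgroup.mem_center_iff.mp hg (y : G))

end CardSubAux

namespace CardSubAux

open Subgroup Pointwise

lemma card_le_one {α : Type*} [Finite α] [Subsingleton α] : Nat.card α ≤ 1 := by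
  have := Nat.card_le_card_of_injective (fun _ : α => ())
    (Function.injective_of_subsingleton _)
  simpa using this

lemma card_split {α : Type*} [Finite α] (q : α → Prop) :
    Nat.card α ≤ Nat.card {a : α // q a} + Nat.card {a : α // ¬ q a} := by
  classical
  rw [← Nat.card_sum]
  apply Nat.card_le_card_of_injective
    (f := fun a => if h : q a then Sum.inl ⟨a, h⟩ else Sum.inr ⟨a, h⟩)
  intro a b hab
  by_cases ha : q a <;> by_cases hb : q b <;> simp [ha, hb] at hab <;> exact hab

universe u

theorem level (p : ℕ) (hp : p.Prime) :
    ∀ (n : ℕ) (P : Type u) [Group P] [Finite P], Nat.card P = n →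
      IsPGroup p P → ∀ (T : Subgroup P) (c k : ℕ), T.index = p ^ c → k ≤ c →
      Nat.card {H : Subgroup P // T ≤ H ∧ H.index = p ^ k} ≤ gb p c k := by
  intro n
  induction n using Nat.strong_induction_on with
  | _ n IH =>
  intro P _ _ hn hP T c k hT hkc
  haveI : Fact p.Prime := ⟨hp⟩
  have hp2 : 2 ≤ p := hp.two_le
  rcases Nat.eq_zero_or_pos k with rfl | hk0
  · -- k = 0 : only H = ⊤
    haveI : Subsingleton {H : Subgroup P // T ≤ H ∧ H.index = p ^ 0} := by
      constructor
      rintro ⟨H1, -, e1⟩ ⟨H2, -, e2⟩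
      have t1 : H1 = ⊤ := Subgroup.index_eq_one.mp (by simpa using e1)
      have t2 : H2 = ⊤ := Subgroup.index_eq_one.mp (by simpa using e2)
      exact Subtype.ext (t1.trans t2.symm)
    rw [gb_zero]
    exact card_le_one
  rcases eq_or_lt_of_le hkc with rfl | hkc'
  · -- k = c : only H = T
    haveI : Subsingleton {H : Subgroup P // T ≤ H ∧ H.index = p ^ k} := by
      constructor
      have key : ∀ a : {H : Subgroup P // T ≤ H ∧ H.index = p ^ k}, a.1 = T := by
        rintro ⟨H, hTH, hHi⟩
        have h1 : T.relIndex H * H.index = T.index := Subgroup.relIndex_mul_index hTH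
        rw [hHi, hT] at h1
        have hrel : T.relIndex H = 1 :=
          Nat.eq_of_mul_eq_mul_right (pow_pos hp.pos k) (h1.trans (one_mul _).symm)
        exact le_antisymm (Subgroup.relIndex_eq_one.mp hrel) hTH
      intro a b
      exact Subtype.ext ((key a).trans (key b).symm)
    calc Nat.card {H : Subgroup P // T ≤ H ∧ H.index = p ^ k} ≤ 1 := card_le_one
      _ = gb p k k := (gb_self k).symm
  -- main case : 0 < k < c
  obtain ⟨c', rfl⟩ : ∃ c', c = c' + 1 := ⟨c - 1, by omega⟩
  obtain ⟨k', rfl⟩ : ∃ k', k = k' + 1 := ⟨k - 1, by omega⟩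
  have hcardP : Nat.card T * p ^ (c' + 1) = Nat.card P := by
    have := Subgroup.card_mul_index T
    rw [hT] at this
    exact this
  haveI : Nontrivial P := by
    rw [← Finite.one_lt_card_iff_nontrivial]
    have h1 : 0 < Nat.card T := Nat.card_pos
    have h2 : p ≤ p ^ (c' + 1) := Nat.le_self_pow (by omega) p
    nlinarith
  have hcnt : Nontrivial (Subgroup.center P) := hP.center_nontrivial
  have hdvd : p ∣ Nat.card (Subgroup.center P) := by
    obtain ⟨m, hm⟩ := IsPGroup.iff_card.mp (hP.to_subgroup (Subgroup.center P))
    rcases m with _ | m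
    · rw [pow_zero] at hm
      have : 1 < Nat.card (Subgroup.center P) := Finite.one_lt_card_iff_nontrivial.mpr hcnt
      omega
    · rw [hm]
      exact dvd_pow_self p (Nat.succ_ne_zero m)
  obtain ⟨z, hz⟩ := exists_prime_orderOf_dvd_card' p hdvd
  set g : P := (z : P) with hgdef
  have hgc : g ∈ Subgroup.center P := z.2
  have hgo : orderOf g = p := by rw [Subgroup.orderOf_coe]; exact hz
  haveI hNn : (Subgroup.zpowers g).Normal := normal_zpowers_of_mem_center hgc
  have hcN : Nat.card (Subgroup.zpowers g) = p := by rw [Nat.card_zpowers, hgo]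
  have hQlt : Nat.card (P ⧸ Subgroup.zpowers g) < n := by
    have h1 : Nat.card (Subgroup.zpowers g) * (Subgroup.zpowers g).index = Nat.card P :=
      Subgroup.card_mul_index _
    rw [hcN, Subgroup.index_eq_card, hn] at h1
    have h3 : 0 < Nat.card (P ⧸ Subgroup.zpowers g) := Nat.card_pos
    nlinarith
  have hQp : IsPGroup p (P ⧸ Subgroup.zpowers g) := hP.to_quotient _
  by_cases hNT : Subgroup.zpowers g ≤ T
  · -- N ≤ T : pass to the quotient
    have hTQ : (T.map (QuotientGroup.mk' (Subgroup.zpowers g))).index = p ^ (c' + 1) := by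
      have := Subgroup.index_map_eq (H := T) (QuotientGroup.mk'_surjective (Subgroup.zpowers g))
        (by rw [QuotientGroup.ker_mk']; exact hNT)
      rw [this, hT]
    calc Nat.card {H : Subgroup P // T ≤ H ∧ H.index = p ^ (k' + 1)}
        ≤ _ := quotient_count (Subgroup.zpowers g) T hNT (p ^ (k' + 1))
      _ ≤ gb p (c' + 1) (k' + 1) := IH _ hQlt _ rfl hQp _ (c' + 1) (k' + 1) hTQ hkc
  · -- N ⊓ T = ⊥ case
    have hgT : g ∉ T := fun h => hNT (Subgroup.zpowers_le.mpr h)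
    obtain ⟨s, hs1, hs2⟩ := index_sup_zpowers hp hgc hgo hgT hT
    have hsc : s = c' := by omega
    rw [hsc] at hs2
    set T₂ := T ⊔ Subgroup.zpowers g with hT₂def
    set α := {H : Subgroup P // T ≤ H ∧ H.index = p ^ (k' + 1)} with hα
    -- part 1 : subgroups containing g
    have h1 : Nat.card {a : α // g ∈ a.1.1} ≤
        Nat.card {H : Subgroup P // T₂ ≤ H ∧ H.index = p ^ (k' + 1)} := by
      apply Nat.card_le_card_of_injective
        (f := fun a => ⟨a.1.1, sup_le a.1.2.1 (Subgroup.zpowers_le.mpr a.2), a.1.2.2⟩)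
      intro a b hab
      have h' : a.1.1 = b.1.1 :=
        congrArg (fun x : {H : Subgroup P // T₂ ≤ H ∧ H.index = p ^ (k' + 1)} => x.1) hab
      exact Subtype.ext (Subtype.ext h')
    have h1' : Nat.card {H : Subgroup P // T₂ ≤ H ∧ H.index = p ^ (k' + 1)} ≤
        gb p c' (k' + 1) := by
      have hNT₂ : Subgroup.zpowers g ≤ T₂ := le_sup_right
      have hT₂Q : (T₂.map (QuotientGroup.mk' (Subgroup.zpowers g))).index = p ^ c' := by
        have := Subgroup.index_map_eq (H := T₂) (QuotientGroup.mk'_surjective (Subgroup.zpowers g))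
          (by rw [QuotientGroup.ker_mk']; exact hNT₂)
        rw [this, hs2]
      calc Nat.card {H : Subgroup P // T₂ ≤ H ∧ H.index = p ^ (k' + 1)}
          ≤ _ := quotient_count (Subgroup.zpowers g) T₂ hNT₂ (p ^ (k' + 1))
        _ ≤ gb p c' (k' + 1) := IH _ hQlt _ rfl hQp _ c' (k' + 1) hT₂Q (by omega)
    -- part 2 : subgroups not containing g
    have h2 : Nat.card {a : α // ¬ g ∈ a.1.1} ≤
        Nat.card {H : Subgroup P // (T ≤ H ∧ H.index = p ^ (k' + 1)) ∧ g ∉ H} := by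
      apply Nat.card_le_card_of_injective (f := fun a => ⟨a.1.1, a.1.2, a.2⟩)
      intro a b hab
      have h' : a.1.1 = b.1.1 :=
        congrArg (fun x : {H : Subgroup P // (T ≤ H ∧ H.index = p ^ (k' + 1)) ∧ g ∉ H} => x.1)
          hab
      exact Subtype.ext (Subtype.ext h')
    set β := {H : Subgroup P // (T ≤ H ∧ H.index = p ^ (k' + 1)) ∧ g ∉ H} with hβ
    have hf : ∀ H : β, T₂ ≤ H.1 ⊔ Subgroup.zpowers g ∧
        (H.1 ⊔ Subgroup.zpowers g).index = p ^ k' := by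
      rintro ⟨H, ⟨hTH, hidx⟩, hgH⟩
      refine ⟨sup_le_sup_right hTH _, ?_⟩
      obtain ⟨s', hs'1, hs'2⟩ := index_sup_zpowers hp hgc hgo hgH hidx
      have hs'k : s' = k' := by omega
      rw [hs'k] at hs'2
      exact hs'2
    have h3 : Nat.card β ≤
        Nat.card {K : Subgroup P // T₂ ≤ K ∧ K.index = p ^ k'} * p ^ (c' - k') := by
      set f : β → {K : Subgroup P // T₂ ≤ K ∧ K.index = p ^ k'} :=
        fun H => ⟨H.1 ⊔ Subgroup.zpowers g, (hf H).1, (hf H).2⟩ with hfdef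
      apply card_le_mul_of_fibers f
      intro K
      have hgK : g ∈ K.1 := K.2.1 (Subgroup.mem_sup_right (Subgroup.mem_zpowers g))
      have hTK : T ≤ K.1 := le_trans le_sup_left K.2.1
      have hNK : Subgroup.zpowers g ≤ K.1 := le_trans le_sup_right K.2.1
      have hgc2 : (⟨g, hgK⟩ : K.1) ∈ Subgroup.center K.1 := mem_center_subgroup hgc hgK
      have hgo2 : orderOf (⟨g, hgK⟩ : K.1) = p := by rw [Subgroup.orderOf_mk]; exact hgo
      have hsub : (T.subgroupOf K.1 ⊔ Subgroup.zpowers (⟨g, hgK⟩ : K.1)).index ∣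
          p ^ (c' - k') := by
        rw [zpowers_subgroupOf hgK,
          ← Subgroup.subgroupOf_sup (A := T) (A' := Subgroup.zpowers g) (B := K.1) hTK hNK]
        have hrel : T₂.relIndex K.1 * K.1.index = T₂.index :=
          Subgroup.relIndex_mul_index K.2.1
        rw [K.2.2, hs2] at hrel
        have heq : p ^ c' = p ^ (c' - k') * p ^ k' := by
          rw [← pow_add]
          congr 1
          omega
        rw [heq] at hrel
        have hfin : T₂.relIndex K.1 = p ^ (c' - k') :=
          Nat.eq_of_mul_eq_mul_right (pow_pos hp.pos k') hrel
        rw [show ((T ⊔ Subgroup.zpowers g).subgroupOf K.1).index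
            = T₂.relIndex K.1 from rfl, hfin]
      have hfb := fiber_bound hp hgc2 hgo2 (T.subgroupOf K.1) hsub
      refine le_trans ?_ hfb
      have hprop : ∀ a : {a : β // f a = K},
          T.subgroupOf K.1 ≤ a.1.1.subgroupOf K.1 ∧
          (⟨g, hgK⟩ : K.1) ∉ a.1.1.subgroupOf K.1 ∧
          a.1.1.subgroupOf K.1 ⊔ Subgroup.zpowers (⟨g, hgK⟩ : K.1) = ⊤ := by
        intro a
        have hsupK : a.1.1 ⊔ Subgroup.zpowers g = K.1 := congrArg Subtype.val a.2
        have hHK : a.1.1 ≤ K.1 := le_trans le_sup_left hsupK.le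
        refine ⟨Subgroup.comap_mono a.1.2.1.1, ?_, ?_⟩
        · intro hmem
          exact a.1.2.2 (Subgroup.mem_subgroupOf.mp hmem)
        · rw [zpowers_subgroupOf hgK,
            ← Subgroup.subgroupOf_sup (A := a.1.1) (A' := Subgroup.zpowers g) (B := K.1) hHK hNK, hsupK,
            Subgroup.subgroupOf_self]
      apply Nat.card_le_card_of_injective
        (f := fun a => ⟨a.1.1.subgroupOf K.1, hprop a⟩)
      intro a b hab
      have hab' : a.1.1.subgroupOf K.1 = b.1.1.subgroupOf K.1 :=
        congrArg (fun x : {H' : Subgroup K.1 // T.subgroupOf K.1 ≤ H' ∧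
          (⟨g, hgK⟩ : K.1) ∉ H' ∧
          H' ⊔ Subgroup.zpowers (⟨g, hgK⟩ : K.1) = ⊤} => x.1) hab
      have hmap := congrArg (Subgroup.map K.1.subtype) hab'
      rw [Subgroup.subgroupOf_map_subtype, Subgroup.subgroupOf_map_subtype] at hmap
      have hsupa : a.1.1 ⊔ Subgroup.zpowers g = K.1 := congrArg Subtype.val a.2
      have hsupb : b.1.1 ⊔ Subgroup.zpowers g = K.1 := congrArg Subtype.val b.2
      have hKa : a.1.1 ≤ K.1 := le_trans le_sup_left hsupa.le
      have hKb : b.1.1 ≤ K.1 := le_trans le_sup_left hsupb.le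
      rw [inf_eq_left.mpr hKa, inf_eq_left.mpr hKb] at hmap
      exact Subtype.ext (Subtype.ext hmap)
    have h3' : Nat.card {K : Subgroup P // T₂ ≤ K ∧ K.index = p ^ k'} ≤ gb p c' k' := by
      have hNT₂ : Subgroup.zpowers g ≤ T₂ := le_sup_right
      have hT₂Q : (T₂.map (QuotientGroup.mk' (Subgroup.zpowers g))).index = p ^ c' := by
        have := Subgroup.index_map_eq (H := T₂) (QuotientGroup.mk'_surjective (Subgroup.zpowers g))
          (by rw [QuotientGroup.ker_mk']; exact hNT₂)
        rw [this, hs2]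
      calc Nat.card {K : Subgroup P // T₂ ≤ K ∧ K.index = p ^ k'}
          ≤ _ := quotient_count (Subgroup.zpowers g) T₂ hNT₂ (p ^ k')
        _ ≤ gb p c' k' := IH _ hQlt _ rfl hQp _ c' k' hT₂Q (by omega)
    -- combine
    calc Nat.card α ≤ Nat.card {a : α // g ∈ a.1.1} + Nat.card {a : α // ¬ g ∈ a.1.1} :=
          card_split _
      _ ≤ gb p c' (k' + 1) + p ^ (c' - k') * gb p c' k' := by
          have hb : Nat.card {a : α // ¬ g ∈ a.1.1} ≤ p ^ (c' - k') * gb p c' k' := by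
            refine le_trans h2 (le_trans h3 ?_)
            rw [mul_comm]
            exact Nat.mul_le_mul_left _ h3'
          exact Nat.add_le_add (le_trans h1 h1') hb
      _ = gb p (c' + 1) (k' + 1) := rfl

end CardSubAux

/-- In a finite `p`-group `P` with `T ≤ P` of index `p^c`, the number of subgroups of `P`
containing `T` is at most `∑_{k=0}^{c} binom_p(c, k)`. -/
theorem card_sub_le_sum_gaussBinom (p : ℕ) (hp : p.Prime) (P : Type*) [Group P] [Finite P]
    (hP : IsPGroup p P) (T : Subgroup P) (c : ℕ) (hT : T.index = p ^ c) :
    ({H : Subgroup P | T ≤ H}.ncard : ℝ) ≤ ∑ k ∈ Finset.range (c + 1), gaussBinom p c k := by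
  classical
  have hp2 : 2 ≤ p := hp.two_le
  have key : Nat.card {H : Subgroup P // T ≤ H} ≤
      ∑ j ∈ Finset.range (c + 1), CardSubAux.gb p c j := by
    have hfun : ∀ H : {H : Subgroup P // T ≤ H},
        ∃ j : Fin (c + 1), H.1.index = p ^ (j : ℕ) := by
      intro H
      have hdvd : H.1.index ∣ p ^ c := by
        rw [← hT]
        exact Subgroup.index_dvd_of_le H.2
      obtain ⟨j, hj, hje⟩ := (Nat.dvd_prime_pow hp).mp hdvd
      exact ⟨⟨j, by omega⟩, hje⟩
    choose f hf using hfun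
    calc Nat.card {H : Subgroup P // T ≤ H}
        = ∑ b : Fin (c + 1), Nat.card {a : {H : Subgroup P // T ≤ H} // f a = b} :=
          CardSubAux.card_eq_sum_fibers f
      _ ≤ ∑ b : Fin (c + 1), CardSubAux.gb p c (b : ℕ) := by
          apply Finset.sum_le_sum
          intro b _
          have hstep : Nat.card {a : {H : Subgroup P // T ≤ H} // f a = b} ≤
              Nat.card {H : Subgroup P // T ≤ H ∧ H.index = p ^ (b : ℕ)} := by
            apply Nat.card_le_card_of_injective (f := fun a =>
              ⟨a.1.1, a.1.2, by
                have h := hf a.1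
                rw [a.2] at h
                exact h⟩)
            intro a a' hab
            have h' : a.1.1 = a'.1.1 :=
              congrArg
                (fun x : {H : Subgroup P // T ≤ H ∧ H.index = p ^ (b : ℕ)} => x.1) hab
            exact Subtype.ext (Subtype.ext h')
          exact hstep.trans (CardSubAux.level p hp (Nat.card P) P rfl hP T c (b : ℕ) hT
            (Nat.lt_succ_iff.mp b.isLt))
      _ = ∑ j ∈ Finset.range (c + 1), CardSubAux.gb p c j := Fin.sum_univ_eq_sum_range _ _
  have hncard : {H : Subgroup P | T ≤ H}.ncard = Nat.card {H : Subgroup P // T ≤ H} := by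
    rw [← Nat.card_coe_set_eq]
    rfl
  rw [hncard]
  calc (Nat.card {H : Subgroup P // T ≤ H} : ℝ)
      ≤ ((∑ j ∈ Finset.range (c + 1), CardSubAux.gb p c j : ℕ) : ℝ) := by exact_mod_cast key
    _ = ∑ k ∈ Finset.range (c + 1), gaussBinom p c k := by
        push_cast
        exact Finset.sum_congr rfl fun j _ => CardSubAux.gb_cast hp2 c j
end

section
/- Let R be a finite group, T ≤ R, and p a prime. Let Syl_p(R,T) be the set of p-Sylow subgroups P of R with T ∩ P ∈ Syl_p(T), on which T acts by conjugation. Then the number of T-orbits on Syl_p(R,T) is at most [R:T]/p^c, where p^c is the largest power of p dividing [R:T]. -/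
open MulAction Pointwise

/-- The stabilizer in `P₀` of the coset `g⁻¹T` is isomorphic (as a type) to `T ∩ gP₀g⁻¹`,
viewed as `Q.subgroupOf T` where `Q = g • P₀`. -/
private def stabEquivAux (p : ℕ) [Fact p.Prime] {R : Type*} [Group R]
    (T : Subgroup R) (P₀ Q : Sylow p R) (g : R) (hg : g • P₀ = Q) :
    stabilizer (P₀ : Subgroup R) ((↑(g⁻¹ : R) : R ⧸ T)) ≃ ((Q : Subgroup R).subgroupOf T) where
  toFun u := by
    refine ⟨⟨g * ((u : ↥(P₀ : Subgroup R)) : R) * g⁻¹, ?_⟩, ?_⟩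
    · have h := u.2
      rw [mem_stabilizer_iff] at h
      have h2 : ((((u : ↥(P₀ : Subgroup R)) : R) * g⁻¹ : R) : R ⧸ T) = ((g⁻¹ : R) : R ⧸ T) := h
      rw [QuotientGroup.eq] at h2
      have h3 : g * (((u : ↥(P₀ : Subgroup R)) : R))⁻¹ * g⁻¹ ∈ T := by
        convert h2 using 1; group
      have := inv_mem h3
      convert this using 1; group
    · rw [Subgroup.mem_subgroupOf]
      show g * _ * g⁻¹ ∈ (Q : Subgroup R)
      rw [← hg, Sylow.coe_subgroup_smul]
      rw [Subgroup.mem_pointwise_smul_iff_inv_smul_mem]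
      convert (u : ↥(P₀ : Subgroup R)).2 using 1
      simp [MulAut.smul_def]
      group
  invFun v := by
    refine ⟨⟨g⁻¹ * ((v : ↥T) : R) * g, ?_⟩, ?_⟩
    · have hQsub : (Q : Subgroup R) = MulAut.conj g • (P₀ : Subgroup R) := by
        rw [← hg]; rfl
      have h2 : ((v : ↥T) : R) ∈ MulAut.conj g • (P₀ : Subgroup R) := by
        rw [← hQsub]; exact Subgroup.mem_subgroupOf.mp v.2
      rw [Subgroup.mem_pointwise_smul_iff_inv_smul_mem] at h2
      convert h2 using 1
      simp [MulAut.smul_def]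
    · rw [mem_stabilizer_iff]
      show (((g⁻¹ * ((v : ↥T) : R) * g) * g⁻¹ : R) : R ⧸ T) = ((g⁻¹ : R) : R ⧸ T)
      rw [QuotientGroup.eq]
      have := inv_mem (v : ↥T).2
      convert this using 1; group
  left_inv u := by
    ext
    show g⁻¹ * (g * _ * g⁻¹) * g = _
    group
  right_inv v := by
    ext
    show g * (g⁻¹ * _ * g) * g⁻¹ = _
    group

/-- Let `T ≤ R` with `R` finite and `p` prime. On the set `Syl_p(R,T)` of `p`-Sylow subgroups
`Q` of `R` with `T ∩ Q ∈ Syl_p(T)`, the subgroup `T` acts by conjugation, and the number of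
`T`-orbits is at most `[R:T] / p^c`, where `p^c` is the `p`-part of `[R:T]`. -/
theorem card_orbits_sylow_le (p : ℕ) [Fact p.Prime] (R : Type*) [Group R] [Finite R]
    (T : Subgroup R) :
    ({O : Set (Sylow p R) | ∃ Q : Sylow p R,
        (∃ S : Sylow p T, (S : Subgroup T) = (Q : Subgroup R).subgroupOf T) ∧
        O = MulAction.orbit T Q}.ncard) * p ^ (T.index.factorization p) ≤ T.index := by
  classical
  set n := T.index.factorization p with hn
  set 𝒪 := {O : Set (Sylow p R) | ∃ Q : Sylow p R,
        (∃ S : Sylow p T, (S : Subgroup T) = (Q : Subgroup R).subgroupOf T) ∧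
        O = MulAction.orbit T Q} with h𝒪
  obtain ⟨P₀⟩ : Nonempty (Sylow p R) := inferInstance
  -- choose data for each orbit
  have hchoice : ∀ O : 𝒪, ∃ (Q : Sylow p R) (g : R),
      (∃ S : Sylow p T, (S : Subgroup T) = (Q : Subgroup R).subgroupOf T) ∧
      (O : Set (Sylow p R)) = MulAction.orbit T Q ∧ g • P₀ = Q := by
    rintro ⟨O, Q, hS, hO⟩
    obtain ⟨g, hg⟩ := MulAction.exists_smul_eq R P₀ Q
    exact ⟨Q, g, hS, hO, hg⟩
  choose Q g hS hO hg using hchoice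
  -- the P₀-orbit of the coset (g O)⁻¹ T has cardinality p ^ n
  have hcard : ∀ O : 𝒪,
      Nat.card (orbit (P₀ : Subgroup R) ((↑((g O)⁻¹ : R) : R ⧸ T))) = p ^ n := by
    intro O
    obtain ⟨S, hSe⟩ := hS O
    set x : R ⧸ T := (↑((g O)⁻¹ : R) : R ⧸ T)
    have horb : Nat.card (orbit (P₀ : Subgroup R) x) *
        Nat.card (stabilizer (P₀ : Subgroup R) x) = Nat.card (P₀ : Subgroup R) := by
      rw [Nat.card_congr (orbitEquivQuotientStabilizer (P₀ : Subgroup R) x)]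
      exact Subgroup.index_mul_card _
    have hstab : Nat.card (stabilizer (P₀ : Subgroup R) x) = Nat.card S := by
      rw [Nat.card_congr (stabEquivAux p T P₀ (Q O) (g O) (hg O)), ← hSe]
    have hP₀ : Nat.card (P₀ : Subgroup R) = p ^ ((Nat.card R).factorization p) :=
      Sylow.card_eq_multiplicity P₀
    have hSc : Nat.card S = p ^ ((Nat.card T).factorization p) :=
      Sylow.card_eq_multiplicity S
    have hfac : (Nat.card R).factorization p =
        (Nat.card T).factorization p + n := by
      have hcardRT : Nat.card T * T.index = Nat.card R := Subgroup.card_mul_index T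
      have hT0 : Nat.card T ≠ 0 := Nat.card_pos.ne'
      have hI0 : T.index ≠ 0 := Subgroup.index_ne_zero_of_finite
      rw [← hcardRT, Nat.factorization_mul hT0 hI0]
      rfl
    have := horb
    rw [hstab, hP₀, hSc, hfac, pow_add] at this
    rw [mul_comm] at this
    exact Nat.eq_of_mul_eq_mul_left (pow_pos (Fact.out (p := p.Prime)).pos _) this
  -- build the injection
  let e : ∀ O : 𝒪, Fin (p ^ n) ≃ orbit (P₀ : Subgroup R) ((↑((g O)⁻¹ : R) : R ⧸ T)) :=
    fun O => ((Nat.equivFinOfCardPos (α := orbit (P₀ : Subgroup R) _)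
      (by rw [hcard O]; exact (pow_pos (Fact.out (p := p.Prime)).pos n).ne')).trans (finCongr (hcard O))).symm
  let F : 𝒪 × Fin (p ^ n) → R ⧸ T := fun z => ↑(e z.1 z.2)
  have hFinj : Function.Injective F := by
    rintro ⟨O, i⟩ ⟨O', i'⟩ hF
    have hOeq : O = O' := by
      -- the two P₀-orbits intersect, hence are equal
      have h1 : F (O, i) ∈ orbit (P₀ : Subgroup R) ((↑((g O)⁻¹ : R) : R ⧸ T)) := (e O i).2
      have h2 : F (O, i) ∈ orbit (P₀ : Subgroup R) ((↑((g O')⁻¹ : R) : R ⧸ T)) := hF ▸ (e O' i').2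
      have horbs : orbit (P₀ : Subgroup R) ((↑((g O)⁻¹ : R) : R ⧸ T)) =
          orbit (P₀ : Subgroup R) ((↑((g O')⁻¹ : R) : R ⧸ T)) := by
        rw [← orbit_eq_iff.mpr h1, ← orbit_eq_iff.mpr h2]
      have hmem : ((↑((g O')⁻¹ : R) : R ⧸ T)) ∈
          orbit (P₀ : Subgroup R) ((↑((g O)⁻¹ : R) : R ⧸ T)) := by
        rw [horbs]; exact mem_orbit_self _
      obtain ⟨u, hu⟩ := hmem
      have hu' : (((u : R) * (g O)⁻¹ : R) : R ⧸ T) = ((↑((g O')⁻¹ : R)) : R ⧸ T) := hu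
      rw [QuotientGroup.eq] at hu'
      set t : R := ((u : R) * (g O)⁻¹)⁻¹ * (g O')⁻¹ with ht
      have htT : t ∈ T := hu'
      -- then Q O' = t⁻¹ • Q O, so the T-orbits coincide
      have hQO' : (⟨t, htT⟩ : T)⁻¹ • Q O = Q O' := by
        have hu3 : ((u : R) • P₀ : Sylow p R) = P₀ :=
          Sylow.smul_eq_iff_mem_normalizer.mpr (Subgroup.le_normalizer u.2)
        have h4 : (⟨t, htT⟩ : T)⁻¹ • Q O = (t⁻¹ : R) • Q O := rfl
        have h5 : t⁻¹ = g O' * (u : R) * (g O)⁻¹ := by rw [ht]; group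
        rw [h4, h5, ← hg O, ← mul_smul]
        have h6 : g O' * (u : R) * (g O)⁻¹ * g O = g O' * (u : R) := by group
        rw [h6, mul_smul, hu3, hg O']
      have hOrbEq : MulAction.orbit T (Q O) = MulAction.orbit T (Q O') :=
        (orbit_eq_iff.mpr ⟨_, hQO'⟩).symm
      apply Subtype.ext
      rw [hO O, hO O', hOrbEq]
    subst hOeq
    have : e O i = e O i' := Subtype.ext hF
    simpa using congrArg (e O).symm this
  have hle : Nat.card (𝒪 × Fin (p ^ n)) ≤ Nat.card (R ⧸ T) :=
    Nat.card_le_card_of_injective F hFinj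
  rw [Nat.card_prod, Nat.card_eq_fintype_card (α := Fin (p ^ n)), Fintype.card_fin,
    Nat.card_coe_set_eq] at hle
  exact hle
end

section
/- For every prime p and every integer a ≥ 0, the sum of Gaussian binomial coefficients satisfies ∑_{k=0}^{a} binom_p(a,k) ≤ S(p,a), where S(p,a) is defined piecewise: S(p,1)=2, S(p,2)=p+3, S(p,3)=2p²+2p+4, S(p,4)=p⁴+3p³+4p²+3p+5, S(p,5)=2p⁶+2p⁵+6p⁴+6p³+6p²+4p+6, and S(p,a)=c(p)·p^{a²/2} for a ≥ 6, with c(p)=2.129·∏_{i≥1}(1−p^{−i})^{−1}. -/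
open Finset

set_option maxHeartbeats 1600000

/-- The Euler-type product `C(p) = ∏_{i ≥ 1} (1 - p^{-i})⁻¹`. -/
noncomputable def Cprod (p : ℕ) : ℝ := ∏' i : ℕ, (1 - ((p : ℝ) ^ (i + 1))⁻¹)⁻¹

/-- The explicit bounding function `S(p,a)` of Spiga, with `S(p,a) = c(p)·p^{a²/2}` for
`a ≥ 6`, where `c(p) = 2.129·C(p)`. -/
noncomputable def Sfun (p a : ℕ) : ℝ :=
  if a = 1 then 2
  else if a = 2 then (p : ℝ) + 3
  else if a = 3 then 2 * (p : ℝ) ^ 2 + 2 * p + 4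
  else if a = 4 then (p : ℝ) ^ 4 + 3 * (p : ℝ) ^ 3 + 4 * (p : ℝ) ^ 2 + 3 * p + 5
  else if a = 5 then
    2 * (p : ℝ) ^ 6 + 2 * (p : ℝ) ^ 5 + 6 * (p : ℝ) ^ 4 + 6 * (p : ℝ) ^ 3
      + 6 * (p : ℝ) ^ 2 + 4 * p + 6
  else 2.129 * Cprod p * (p : ℝ) ^ ((a : ℝ) ^ 2 / 2)

lemma one_le_Cprod (p : ℕ) (hp : 2 ≤ p) : 1 ≤ Cprod p := by
  have key : ∀ i : ℕ, (1:ℝ) ≤ (1 - ((p : ℝ) ^ (i + 1))⁻¹)⁻¹ := by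
    intro i
    have hpi : (2:ℝ) ≤ (p:ℝ) ^ (i+1) := by
      calc (2:ℝ) ≤ (p:ℝ) := by exact_mod_cast hp
      _ ≤ (p:ℝ)^(i+1) := le_self_pow₀ (by exact_mod_cast le_trans one_le_two hp) (by simp)
    have h1 : ((p:ℝ) ^ (i+1))⁻¹ ≤ 1/2 := by
      rw [inv_le_comm₀] <;> nlinarith
    have h2 : (0:ℝ) < ((p:ℝ) ^ (i+1))⁻¹ := by positivity
    rw [one_le_inv_iff₀]
    constructor <;> nlinarith
  rw [Cprod]
  by_cases h : Multipliable fun i : ℕ => (1 - ((p : ℝ) ^ (i + 1))⁻¹)⁻¹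
  · refine ge_of_tendsto' h.hasProd fun s => ?_
    have := Finset.prod_le_prod (s := s) (f := fun _ => (1:ℝ))
      (g := fun i : ℕ => (1 - ((p : ℝ) ^ (i + 1))⁻¹)⁻¹) (by intros; norm_num)
      (fun i _ => key i)
    simpa using this
  · rw [tprod_eq_one_of_not_multipliable h]

lemma sum_aux (a k : ℕ) : ∑ i ∈ Finset.range k, ((a:ℝ) - 2*i) = k * ((a:ℝ) + 1 - k) := by
  induction k with
  | zero => simp
  | succ n ih => rw [Finset.sum_range_succ, ih]; push_cast; ring

lemma gaussBinom_le (p a k : ℕ) (hp : 2 ≤ p) (hk : k ≤ a) :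
    gaussBinom p a k ≤ (p:ℝ) ^ ((k:ℝ) * ((a:ℝ) + 1 - k)) := by
  have hp1 : (1:ℝ) < (p:ℝ) := by exact_mod_cast hp
  have hp0 : (0:ℝ) < (p:ℝ) := by positivity
  rw [← sum_aux a k, Real.rpow_sum_of_pos hp0, gaussBinom]
  apply Finset.prod_le_prod
  · intro i hi
    have h1 : (1:ℝ) ≤ (p:ℝ) ^ (a - i) := one_le_pow₀ hp1.le
    have h2 : (1:ℝ) ≤ (p:ℝ) ^ (i + 1) := one_le_pow₀ hp1.le
    have h3 : (1:ℝ) < (p:ℝ) ^ (i + 1) := one_lt_pow₀ hp1 (by simp)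
    exact div_nonneg (by linarith) (by linarith)
  · intro i hi
    have hi' : i < k := Finset.mem_range.mp hi
    have hia : i < a := lt_of_lt_of_le hi' hk
    have hnum : (p:ℝ) ^ (a - i) - 1 ≤ (p:ℝ) ^ (a - i) := by linarith
    have hden : (p:ℝ) ^ i ≤ (p:ℝ) ^ (i + 1) - 1 := by
      have hpow : (p:ℝ) ^ (i+1) = (p:ℝ) ^ i * (p:ℝ) := pow_succ _ _
      have : (p:ℝ) ^ i * 2 ≤ (p:ℝ) ^ i * (p:ℝ) := by
        apply mul_le_mul_of_nonneg_left (by exact_mod_cast hp) (by positivity)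
      nlinarith [one_le_pow₀ (n := i) hp1.le]
    have hd0 : (0:ℝ) < (p:ℝ) ^ i := by positivity
    calc ((p:ℝ) ^ (a - i) - 1) / ((p:ℝ) ^ (i + 1) - 1)
        ≤ (p:ℝ) ^ (a - i) / (p:ℝ) ^ i := by
          apply div_le_div₀ (by positivity) hnum hd0 hden
      _ = (p:ℝ) ^ ((a:ℝ) - 2*i) := by
          rw [← Real.rpow_natCast (p:ℝ) (a - i), ← Real.rpow_natCast (p:ℝ) i,
            ← Real.rpow_sub hp0]
          congr 1
          have hcast : ((a - i : ℕ) : ℝ) = (a:ℝ) - i := by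
            have := Nat.cast_sub (le_of_lt hia) (R := ℝ)
            simpa using this
          rw [hcast]; ring

/-- For every prime `p` and `a ≥ 0`, `∑_{k=0}^{a} binom_p(a,k) ≤ S(p,a)`. -/
theorem sum_gaussBinom_le_Sfun (p a : ℕ) (hp : p.Prime) :
    ∑ k ∈ Finset.range (a + 1), gaussBinom p a k ≤ Sfun p a := by
  have hp2 : 2 ≤ p := hp.two_le
  have hp2R : (2:ℝ) ≤ (p:ℝ) := by exact_mod_cast hp2
  have hp1 : (1:ℝ) < (p:ℝ) := by linarith
  have key : ∀ n : ℕ, n ≠ 0 → (p:ℝ)^n - 1 ≠ 0 := by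
    intro n hn
    have : (p:ℝ) ≤ (p:ℝ)^n := le_self_pow₀ (by linarith) hn
    nlinarith
  have h1 := key 1 one_ne_zero
  have h2 := key 2 two_ne_zero
  have h3 := key 3 three_ne_zero
  have h4 := key 4 four_ne_zero
  have h5 := key 5 (by norm_num)
  rw [pow_one] at h1
  have hC := one_le_Cprod p hp2
  by_cases ha : 6 ≤ a
  · -- general case
    have hSfun : Sfun p a = 2.129 * Cprod p * (p:ℝ) ^ ((a:ℝ) ^ 2 / 2) := by
      rw [Sfun, if_neg (by omega), if_neg (by omega), if_neg (by omega),
        if_neg (by omega), if_neg (by omega)]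
    rw [hSfun]
    have bound1 : ∀ k ∈ Finset.range (a+1),
        gaussBinom p a k ≤ (p:ℝ) ^ (((a:ℝ)+1)^2/4) := by
      intro k hk
      have hk' : k ≤ a := by
        have := Finset.mem_range.mp hk; omega
      refine (gaussBinom_le p a k hp2 hk').trans ?_
      rw [Real.rpow_le_rpow_left_iff hp1]
      nlinarith [sq_nonneg ((a:ℝ) + 1 - 2*k)]
    have hsum := Finset.sum_le_card_nsmul _ _ _ bound1
    rw [Finset.card_range, nsmul_eq_mul, Nat.cast_add, Nat.cast_one] at hsum
    refine hsum.trans ?_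
    set X : ℝ := (p:ℝ) ^ (((a:ℝ)+1)^2/4) with hX
    set Y : ℝ := (p:ℝ) ^ (((a:ℝ)^2 - 2*a - 1)/4) with hY
    have hX0 : 0 < X := Real.rpow_pos_of_pos (by linarith) _
    have hY0 : 0 < Y := Real.rpow_pos_of_pos (by linarith) _
    have ha6 : (6:ℝ) ≤ (a:ℝ) := by exact_mod_cast ha
    have e1 : (p:ℝ) ^ ((a:ℝ)^2/2) = X * Y := by
      rw [hX, hY, ← Real.rpow_add (by linarith)]
      congr 1; ring
    have e2 : (p:ℝ) ^ ((a:ℝ) - 1) ≤ Y := by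
      rw [hY, Real.rpow_le_rpow_left_iff hp1]
      nlinarith
    have e3 : (2:ℝ) ^ ((a:ℝ) - 1) ≤ (p:ℝ) ^ ((a:ℝ) - 1) :=
      Real.rpow_le_rpow (by norm_num) hp2R (by linarith)
    have e4 : ((a:ℝ) + 1) ≤ 2 * (2:ℝ) ^ ((a:ℝ) - 1) := by
      have e5 : (2:ℝ) * (2:ℝ) ^ ((a:ℝ) - 1) = (2:ℝ) ^ (a:ℝ) := by
        rw [← Real.rpow_one_add' (by norm_num)]
        · congr 1; ring
        · ring_nf; linarith
      rw [e5, Real.rpow_natCast]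
      have : a < 2 ^ a := Nat.lt_two_pow_self (n := a)
      exact_mod_cast Nat.succ_le_of_lt this
    have hY2 : ((a:ℝ) + 1) / 2 ≤ Y := by
      have := e4.trans (by linarith : 2 * (2:ℝ) ^ ((a:ℝ) - 1) ≤ 2 * Y)
      linarith
    rw [e1]
    have step : ((a:ℝ) + 1) * X ≤ (2 * Y) * X := by
      apply mul_le_mul_of_nonneg_right (by linarith) hX0.le
    refine step.trans ?_
    have hCp : (2:ℝ) ≤ 2.129 * Cprod p := by nlinarith
    nlinarith [mul_pos hX0 hY0, mul_le_mul_of_nonneg_right hCp (mul_pos hX0 hY0).le]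
  · -- small cases
    push_neg at ha
    interval_cases a
    · -- a = 0
      rw [Sfun]
      norm_num [gaussBinom]
      nlinarith
    · -- a = 1
      apply le_of_eq
      simp only [Finset.sum_range_succ, Finset.sum_range_zero, gaussBinom,
        Finset.prod_range_succ, Finset.prod_range_zero, Sfun]
      norm_num
      rw [div_self h1]; norm_num
    · apply le_of_eq
      simp only [Finset.sum_range_succ, Finset.sum_range_zero, gaussBinom,
        Finset.prod_range_succ, Finset.prod_range_zero, Sfun]
      norm_num
      field_simp
      ring
    · apply le_of_eq
      simp only [Finset.sum_range_succ, Finset.sum_range_zero, gaussBinom,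
        Finset.prod_range_succ, Finset.prod_range_zero, Sfun]
      norm_num
      field_simp
      ring
    · apply le_of_eq
      simp only [Finset.sum_range_succ, Finset.sum_range_zero, gaussBinom,
        Finset.prod_range_succ, Finset.prod_range_zero, Sfun]
      norm_num
      field_simp
      ring
    · apply le_of_eq
      simp only [Finset.sum_range_succ, Finset.sum_range_zero, gaussBinom,
        Finset.prod_range_succ, Finset.prod_range_zero, Sfun]
      norm_num
      field_simp
      ring
end
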